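/- arXiv:1509.04910 — 2 statements merged into one kernel-verified Lean document; each statement's English description precedes it below -/
import Mathlib

section
/- If 𝔠 ∈ D satisfies the regularity condition liminf_{N→∞} min_{1≤j≤n} |𝔠 − λ_j⁻¹| > 0, then there exists δ > 0 such that for every sufficiently large N the closed disc {z ∈ ℂ : |z − 𝔠| ≤ δ} contains none of the points 0, λ_1⁻¹, …, λ_n⁻¹ (so g_N is holomorphic on this disc), its intersection with ℝ is contained in D, and sup_{|z−𝔠|≤δ} |g_N(z) − g(z)| → 0 as N → ∞. -/
open MeasureTheory Filter Topology
open scoped ENNReal Classical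

noncomputable section

/-- The (topological) support of a Borel measure on `ℝ`: the set of points all of whose
neighborhoods have positive measure. -/
def msupport (μ : Measure ℝ) : Set ℝ := {x | ∀ U ∈ nhds x, μ U ≠ 0}

lemma not_mem_msupport {μ : Measure ℝ} {x : ℝ} :
    x ∉ msupport μ ↔ ∃ U ∈ nhds x, μ U = 0 := by
  simp [msupport]

lemma msupport_isClosed (μ : Measure ℝ) : IsClosed (msupport μ) := by
  rw [← isOpen_compl_iff, isOpen_iff_mem_nhds]
  intro x hx
  rw [Set.mem_compl_iff, not_mem_msupport] at hx
  obtain ⟨U, hU, hU0⟩ := hx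
  refine Filter.mem_of_superset (interior_mem_nhds.2 hU) ?_
  intro y hy
  rw [Set.mem_compl_iff, not_mem_msupport]
  exact ⟨U, mem_interior_iff_mem_nhds.1 hy, hU0⟩

lemma msupport_compl_null (μ : Measure ℝ) : μ (msupport μ)ᶜ = 0 := by
  refine measure_null_of_locally_null _ fun x hx => ?_
  rw [Set.mem_compl_iff, not_mem_msupport] at hx
  obtain ⟨U, hU, hU0⟩ := hx
  exact ⟨U, mem_nhdsWithin_of_mem_nhds hU, hU0⟩

/-- The complex absolute value, as a bundled absolute value given by the norm. -/
def Complex.abs : AbsoluteValue ℂ ℝ := IsAbsoluteValue.toAbsoluteValue (norm : ℂ → ℝ)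

lemma Complex.abs_apply' (z : ℂ) : Complex.abs z = ‖z‖ := rfl

lemma Complex.abs_ofReal (r : ℝ) : Complex.abs (r : ℂ) = |r| := by
  rw [Complex.abs_apply', Complex.norm_real, Real.norm_eq_abs]

lemma Complex.abs_natCast (k : ℕ) : Complex.abs (k : ℂ) = k := Complex.norm_natCast k

lemma Complex.abs_conj (z : ℂ) : Complex.abs ((starRingEnd ℂ) z) = Complex.abs z :=
  Complex.norm_conj z

lemma Complex.sq_abs (z : ℂ) : Complex.abs z ^ 2 = Complex.normSq z := Complex.sq_norm z

lemma Complex.abs_re_le_abs (z : ℂ) : |z.re| ≤ Complex.abs z := Complex.abs_re_le_norm z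

lemma Complex.abs_im_le_abs (z : ℂ) : |z.im| ≤ Complex.abs z := Complex.abs_im_le_norm z

set_option maxHeartbeats 2000000 in
/-- Under the regularity condition at `𝔠 ∈ D`, for some `δ > 0` the functions
`g_N` are eventually holomorphic on the closed `δ`-disc around `𝔠` (which avoids `0` and all
`λ_j⁻¹` and whose real trace lies in `D`) and converge uniformly to `g` there. -/
theorem regularity_uniform_convergence
    (γ : ℝ) (hγ : 0 < γ)
    (ν : Measure ℝ) [IsProbabilityMeasure ν]
    (hν_comp : IsCompact (msupport ν)) (hν_pos : msupport ν ⊆ Set.Ioi 0)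
    (n : ℕ → ℕ) (hn : Tendsto (fun N => (n N : ℝ) / N) atTop (nhds γ))
    (lam : (N : ℕ) → Fin (n N) → ℝ)
    (hlam_mono : ∀ N, Monotone (lam N))
    (hlam_pos : ∀ N j, 0 < lam N j)
    (hlam_inf : ∃ ε > 0, ∀ᶠ N in atTop, ∀ j, ε ≤ lam N j)
    (hlam_sup : ∃ C : ℝ, ∀ N, ∀ j, lam N j ≤ C)
    (hweak : ∀ f : BoundedContinuousFunction ℝ ℝ,
      Tendsto (fun N => (n N : ℝ)⁻¹ * ∑ j, f (lam N j)) atTop (nhds (∫ x, f x ∂ν)))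
    -- the functions g_N and g, extended to the complex plane
    (gC : ℂ → ℂ) (hgC : gC = fun z => z⁻¹ + (γ : ℂ) * ∫ l, (l : ℂ) / (1 - z * l) ∂ν)
    (gNC : ℕ → ℂ → ℂ)
    (hgNC : gNC = fun (N : ℕ) (z : ℂ) => z⁻¹ + (N : ℂ)⁻¹ * ∑ j, (lam N j : ℂ) / (1 - z * lam N j))
    (Dset : Set ℝ) (hD : Dset = {x : ℝ | x ≠ 0 ∧ x⁻¹ ∉ msupport ν})
    -- the point 𝔠 and the regularity condition
    (c : ℝ) (hcD : c ∈ Dset)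
    (hreg : ∃ ε > 0, ∀ᶠ N in atTop, ∀ j, ε ≤ |c - (lam N j)⁻¹|) :
    ∃ δ > 0,
      (∀ᶠ N in atTop,
        (0 : ℂ) ∉ Metric.closedBall (c : ℂ) δ ∧
        (∀ j, ((lam N j : ℂ))⁻¹ ∉ Metric.closedBall (c : ℂ) δ) ∧
        DifferentiableOn ℂ (gNC N) (Metric.closedBall (c : ℂ) δ)) ∧
      (∀ x : ℝ, (x : ℂ) ∈ Metric.closedBall (c : ℂ) δ → x ∈ Dset) ∧
      TendstoUniformlyOn (fun N z => gNC N z) gC atTop (Metric.closedBall (c : ℂ) δ) := by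
  obtain ⟨hc0, hcinv⟩ : c ≠ 0 ∧ c⁻¹ ∉ msupport ν := by rw [hD] at hcD; exact hcD
  obtain ⟨ε₀, hε₀pos, hε₀ev⟩ := hlam_inf
  obtain ⟨ε, hεpos, hεev⟩ := hreg
  obtain ⟨C₀, hC₀⟩ := hlam_sup
  set C := max C₀ 1 with hCdef
  have hC1 : (1:ℝ) ≤ C := le_max_right _ _
  have hCpos : (0:ℝ) < C := lt_of_lt_of_le one_pos hC1
  have hC : ∀ N j, lam N j ≤ C := fun N j => (hC₀ N j).trans (le_max_left _ _)
  -- measure facts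
  have hclosed := msupport_isClosed ν
  have hnull := msupport_compl_null ν
  have hae : ∀ᵐ l ∂ν, l ∈ msupport ν := by
    rw [ae_iff]
    exact hnull
  have hne : (msupport ν).Nonempty := by
    by_contra h
    rw [Set.not_nonempty_iff_eq_empty] at h
    have h1 : ν Set.univ = 0 := by
      have := hnull; rw [h] at this; simpa using this
    simp [measure_univ] at h1
  obtain ⟨a, haS, ha_lb⟩ := hν_comp.exists_isLeast hne
  obtain ⟨b, hbS, hb_ub⟩ := hν_comp.exists_isGreatest hne
  have ha0 : 0 < a := hν_pos haS
  have hb0 : 0 < b := hν_pos hbS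
  have hsub : msupport ν ⊆ Set.Icc a b := fun l hl => ⟨ha_lb hl, hb_ub hl⟩
  -- a neighborhood of c inside the "good" set
  have hS : ({x : ℝ | x⁻¹ ∉ msupport ν} ∩ {x : ℝ | x ≠ 0}) ∈ 𝓝 c := by
    have h1 : {x : ℝ | x⁻¹ ∉ msupport ν} ∈ 𝓝 c := by
      have hcont : ContinuousAt (fun x : ℝ => x⁻¹) c := continuousAt_inv₀ hc0
      exact hcont.preimage_mem_nhds (hclosed.isOpen_compl.mem_nhds hcinv)
    have h2 : {x : ℝ | x ≠ 0} ∈ 𝓝 c := isOpen_ne.mem_nhds hc0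
    exact Filter.inter_mem h1 h2
  obtain ⟨r, hr0, hrball⟩ := Metric.mem_nhds_iff.1 hS
  have hcabs : (0:ℝ) < |c| := abs_pos.2 hc0
  set δ := min (min (|c| / 2) (ε / 2)) (r / 2) with hδdef
  have hδ0 : 0 < δ := lt_min (lt_min (by positivity) (by positivity)) (by positivity)
  have hδc : δ ≤ |c| / 2 := (min_le_left _ _).trans (min_le_left _ _)
  have hδε : δ ≤ ε / 2 := (min_le_left _ _).trans (min_le_right _ _)
  have hδr : δ ≤ r / 2 := min_le_right _ _
  have F1 : ∀ x : ℝ, |x - c| ≤ δ → x ≠ 0 ∧ x⁻¹ ∉ msupport ν := by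
    intro x hx
    have hxball : x ∈ Metric.ball c r := by
      rw [Metric.mem_ball, Real.dist_eq]; linarith
    have := hrball hxball
    exact ⟨this.2, this.1⟩
  have h0B : (0 : ℂ) ∉ Metric.closedBall (c : ℂ) δ := by
    intro h
    rw [Metric.mem_closedBall, Complex.dist_eq, zero_sub, norm_neg,
      Complex.norm_real, Real.norm_eq_abs] at h
    linarith
  have hre : ∀ z ∈ Metric.closedBall (c : ℂ) δ, |z.re - c| ≤ δ := by
    intro z hz
    rw [Metric.mem_closedBall, Complex.dist_eq] at hz
    calc |z.re - c| = |(z - (c:ℂ)).re| := by simp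
    _ ≤ Complex.abs (z - (c:ℂ)) := Complex.abs_re_le_abs _
    _ ≤ δ := hz
  have F2 : ∀ x : ℝ, (x:ℂ) ∈ Metric.closedBall (c : ℂ) δ → x ∈ Dset := by
    intro x hx
    have h1 : |x - c| ≤ δ := by simpa using hre x hx
    rw [hD]; exact F1 x h1
  -- the uniform lower bound m on |1 - x λ| over the real trace and the support of ν
  have hKc : IsCompact ((Set.Icc (c - δ) (c + δ)) ×ˢ msupport ν) := isCompact_Icc.prod hν_comp
  have hKne : ((Set.Icc (c - δ) (c + δ)) ×ˢ msupport ν).Nonempty :=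
    ⟨(c, a), ⟨⟨by linarith, by linarith⟩, haS⟩⟩
  obtain ⟨p₀, hp₀K, hp₀min⟩ := hKc.exists_isMinOn hKne
    (show ContinuousOn (fun p : ℝ × ℝ => |1 - p.1 * p.2|) _ from
      ((continuous_const.sub (continuous_fst.mul continuous_snd)).abs).continuousOn)
  set m := |1 - p₀.1 * p₀.2| with hmdef
  have hm0 : 0 < m := by
    obtain ⟨h1, h2⟩ := hp₀K
    have hx := F1 p₀.1 (abs_le.2 ⟨by linarith [h1.1], by linarith [h1.2]⟩)
    rw [hmdef, abs_pos]
    intro hcontra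
    have hxl : p₀.1 * p₀.2 = 1 := by linarith
    have hinv : p₀.1⁻¹ = p₀.2 := inv_eq_of_mul_eq_one_right hxl
    exact hx.2 (hinv ▸ h2)
  have hm_bound : ∀ z ∈ Metric.closedBall (c : ℂ) δ, ∀ l ∈ msupport ν,
      m ≤ Complex.abs (1 - z * l) := by
    intro z hz l hl
    have h0 := abs_le.1 (hre z hz)
    have h1 : (z.re, l) ∈ (Set.Icc (c - δ) (c + δ)) ×ˢ msupport ν :=
      ⟨⟨by linarith [h0.1], by linarith [h0.2]⟩, hl⟩
    calc m ≤ |1 - z.re * l| := hp₀min h1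
    _ = |(1 - z * (l:ℂ)).re| := by simp [Complex.sub_re, Complex.mul_re]
    _ ≤ Complex.abs (1 - z * (l:ℂ)) := Complex.abs_re_le_abs _
  set m₁ := ε₀ * (ε / 2) with hm₁def
  have hm₁0 : 0 < m₁ := by positivity
  have hm1_bound : ∀ l : ℝ, ε₀ ≤ l → ε ≤ |c - l⁻¹| → ∀ z ∈ Metric.closedBall (c : ℂ) δ,
      m₁ ≤ Complex.abs (1 - z * l) := by
    intro l hl1 hl2 z hz
    have hl0 : 0 < l := lt_of_lt_of_le hε₀pos hl1
    have hlC : ((l:ℝ):ℂ) ≠ 0 := Complex.ofReal_ne_zero.2 hl0.ne'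
    have hkey : (1 : ℂ) - z * l = -(l:ℂ) * (z - ((l:ℂ))⁻¹) := by
      field_simp
      ring
    have h1 : ε / 2 ≤ Complex.abs (z - ((l:ℂ))⁻¹) := by
      have t2 : dist ((c:ℝ):ℂ) (((l⁻¹:ℝ)):ℂ) = |c - l⁻¹| := by
        rw [Complex.dist_eq, ← Complex.ofReal_sub, Complex.norm_real, Real.norm_eq_abs]
      have t3 : dist ((c:ℝ):ℂ) z ≤ δ := by rw [dist_comm]; exact Metric.mem_closedBall.1 hz
      have t4 : dist z (((l⁻¹:ℝ)):ℂ) = Complex.abs (z - ((l:ℂ))⁻¹) := by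
        rw [Complex.dist_eq, Complex.ofReal_inv]; rfl
      have t1 := dist_triangle ((c:ℝ):ℂ) z (((l⁻¹:ℝ)):ℂ)
      rw [t2, t4] at t1
      linarith
    have h2 : m₁ = ε₀ * (ε/2) := hm₁def
    calc m₁ = ε₀ * (ε/2) := h2
    _ ≤ l * Complex.abs (z - ((l:ℂ))⁻¹) :=
      mul_le_mul hl1 h1 (by positivity) (le_of_lt hl0)
    _ = Complex.abs (1 - z * l) := by
      rw [hkey, map_mul, map_neg_eq_map, Complex.abs_ofReal, abs_of_pos hl0]
  -- eventual conditions
  have hnev : ∀ᶠ N in atTop, (n N : ℝ) / N ∈ Set.Ioo (γ/2) (γ+1) :=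
    hn (Ioo_mem_nhds (by linarith) (by linarith))
  have hcond : ∀ᶠ N in atTop, (∀ j, ε₀ ≤ lam N j) ∧ (∀ j, ε ≤ |c - (lam N j)⁻¹|) ∧
      0 < n N ∧ 0 < N ∧ (n N : ℝ) / N ≤ γ + 1 := by
    filter_upwards [hε₀ev, hεev, hnev, eventually_gt_atTop 0] with N h1 h2 h3 h4
    refine ⟨h1, h2, ?_, h4, h3.2.le⟩
    rcases Nat.eq_zero_or_pos (n N) with h | h
    · exfalso
      rw [h] at h3
      simp only [Nat.cast_zero, zero_div, Set.mem_Ioo] at h3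
      linarith [h3.1]
    · exact h
  -- lower bound on |z| on the disc
  set r₀ := |c| / 2 with hr₀def
  have hr₀ : 0 < r₀ := by positivity
  have habs_z : ∀ z ∈ Metric.closedBall (c:ℂ) δ, r₀ ≤ Complex.abs z := by
    intro z hz
    rw [Metric.mem_closedBall, Complex.dist_eq] at hz
    have h1 := norm_sub_norm_le ((c:ℝ):ℂ) z
    rw [norm_sub_rev] at h1
    have h2 : ‖z - ((c:ℝ):ℂ)‖ ≤ δ := hz
    have h3 : ‖((c:ℝ):ℂ)‖ = |c| := by rw [Complex.norm_real, Real.norm_eq_abs]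
    have h4 : ‖z‖ = Complex.abs z := rfl
    rw [h3, h4] at h1
    linarith
  -- the generic term bound
  have hterm : ∀ (u v : ℂ) (l μ1 μ2 : ℝ), 0 < μ1 → 0 < μ2 → 0 ≤ l →
      μ1 ≤ Complex.abs (1 - u * l) → μ2 ≤ Complex.abs (1 - v * l) →
      Complex.abs ((l:ℂ) / (1 - u * l) - (l:ℂ) / (1 - v * l))
        ≤ (l * l / (μ1 * μ2)) * Complex.abs (u - v) := by
    intro u v l μ1 μ2 hμ1 hμ2 hl h1 h2
    have d1 : (1 : ℂ) - u * l ≠ 0 := by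
      intro h; rw [h] at h1; simp only [map_zero] at h1; linarith
    have d2 : (1 : ℂ) - v * l ≠ 0 := by
      intro h; rw [h] at h2; simp only [map_zero] at h2; linarith
    have e : (l:ℂ) / (1 - u * l) - (l:ℂ) / (1 - v * l)
        = ((l:ℂ) * l * (u - v)) / ((1 - u * l) * (1 - v * l)) := by
      rw [div_sub_div _ _ d1 d2]
      ring
    rw [e]
    simp only [map_div₀, map_mul, Complex.abs_ofReal, abs_of_nonneg hl]
    have h5 : l * l * Complex.abs (u - v) / (Complex.abs (1 - u * l) * Complex.abs (1 - v * l))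
        ≤ l * l * Complex.abs (u - v) / (μ1 * μ2) := by
      gcongr l * l * Complex.abs (u - v) / ?_
      exact mul_le_mul h1 h2 hμ2.le (Complex.abs.nonneg _)
    refine h5.trans (le_of_eq ?_)
    ring
  -- integrability and pointwise convergence at each point of the closed disc
  have key : ∀ z ∈ Metric.closedBall (c:ℂ) δ,
      Integrable (fun l : ℝ => (l:ℂ) / (1 - z * l)) ν ∧
      Tendsto (fun N => gNC N z) atTop (𝓝 (gC z)) := by
    intro z hz
    obtain ⟨lo, hlodef⟩ : ∃ lo : ℝ, lo = min ε₀ a := ⟨_, rfl⟩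
    obtain ⟨hi, hhidef⟩ : ∃ hi : ℝ, hi = max C b := ⟨_, rfl⟩
    have hlo0 : 0 < lo := hlodef ▸ lt_min hε₀pos ha0
    have hhi0 : 0 < hi := hhidef ▸ lt_of_lt_of_le hCpos (le_max_left _ _)
    obtain ⟨q, hqdef⟩ : ∃ q : ℝ, q = min m m₁ := ⟨_, rfl⟩
    have hq0 : 0 < q := hqdef ▸ lt_min hm0 hm₁0
    obtain ⟨t, htdef⟩ : ∃ t : ℝ → ℝ, t = fun l => max lo (min l hi) := ⟨_, rfl⟩
    obtain ⟨w, hwdef⟩ : ∃ w : ℝ → ℂ, w = fun l => 1 - z * ((t l : ℝ) : ℂ) := ⟨_, rfl⟩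
    obtain ⟨d, hddef⟩ : ∃ d : ℝ → ℝ, d = fun l => max (Complex.normSq (w l)) (q^2/2) := ⟨_, rfl⟩
    have hdpos : ∀ l, 0 < d l := by
      intro l
      rw [hddef]
      exact lt_of_lt_of_le (by positivity) (le_max_right _ _)
    obtain ⟨φ, hφdef⟩ : ∃ φ : ℝ → ℂ,
        φ = fun l => ((t l : ℝ) : ℂ) * (starRingEnd ℂ) (w l) / (((d l : ℝ)) : ℂ) := ⟨_, rfl⟩
    have htmem : ∀ l : ℝ, lo ≤ l → l ≤ hi → t l = l := by
      intro l h1 h2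
      simp only [htdef]
      rw [min_eq_left h2, max_eq_right h1]
    have hφeq : ∀ l : ℝ, lo ≤ l → l ≤ hi → q ≤ Complex.abs (1 - z * l) →
        φ l = (l:ℂ) / (1 - z * l) := by
      intro l h1 h2 h3
      have htl := htmem l h1 h2
      have hwl : w l = 1 - z * l := by simp only [hwdef]; rw [htl]
      have hwne : (1:ℂ) - z * l ≠ 0 := by
        intro h; rw [h] at h3; simp only [map_zero] at h3; linarith
      have hcne : (starRingEnd ℂ) (1 - z * l) ≠ 0 := by
        rw [Ne, map_eq_zero]
        exact hwne
      have hdl : d l = Complex.normSq (1 - z * l) := by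
        simp only [hddef]
        rw [hwl]
        apply max_eq_left
        rw [← Complex.sq_abs]
        nlinarith [Complex.abs.nonneg (1 - z * (l:ℂ))]
      simp only [hφdef]
      rw [htl, hwl, hdl]
      rw [show ((Complex.normSq (1 - z * (l:ℂ)) : ℝ) : ℂ)
        = (1 - z * l) * (starRingEnd ℂ) (1 - z * l) from (Complex.mul_conj _).symm]
      rw [div_eq_div_iff (mul_ne_zero hwne hcne) hwne]
      ring
    -- continuity and boundedness of the cutoff function φ
    have htc : Continuous t := by
      rw [htdef]; exact continuous_const.max (continuous_id.min continuous_const)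
    have hwc : Continuous w := by
      rw [hwdef]
      exact continuous_const.sub (continuous_const.mul (Complex.continuous_ofReal.comp htc))
    have hdc : Continuous d := by
      rw [hddef]
      exact (Complex.continuous_normSq.comp hwc).max continuous_const
    have hφc : Continuous φ := by
      rw [hφdef]
      refine Continuous.div
        ((Complex.continuous_ofReal.comp htc).mul (Complex.continuous_conj.comp hwc))
        (Complex.continuous_ofReal.comp hdc) ?_
      intro l
      exact_mod_cast (hdpos l).ne'
    have htpos : ∀ l, 0 < t l := by
      intro l
      simp only [htdef]
      exact lt_of_lt_of_le hlo0 (le_max_left _ _)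
    have htbd : ∀ l : ℝ, |t l| ≤ lo + hi := by
      intro l
      rw [abs_of_pos (htpos l)]
      simp only [htdef]
      exact max_le (by linarith) ((min_le_right l hi).trans (by linarith))
    have hwbd : ∀ l, Complex.abs (w l) ≤ 1 + Complex.abs z * (lo + hi) := by
      intro l
      simp only [hwdef]
      calc Complex.abs (1 - z * ((t l : ℝ):ℂ))
          ≤ Complex.abs 1 + Complex.abs (z * ((t l : ℝ):ℂ)) := by
            have := norm_sub_le (1 : ℂ) (z * ((t l : ℝ):ℂ))
            exact this
        _ = 1 + Complex.abs z * |t l| := by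
            rw [map_one, map_mul, Complex.abs_ofReal]
        _ ≤ 1 + Complex.abs z * (lo + hi) := by
            have h7 := htbd l
            have h8 : (0:ℝ) ≤ Complex.abs z := Complex.abs.nonneg z
            nlinarith
    obtain ⟨Mb, hMbdef⟩ : ∃ Mb : ℝ,
        Mb = (lo + hi) * (1 + Complex.abs z * (lo + hi)) / (q^2/2) := ⟨_, rfl⟩
    have hφbd : ∀ l, Complex.abs (φ l) ≤ Mb := by
      intro l
      simp only [hφdef]
      rw [map_div₀, map_mul, Complex.abs_ofReal (t l), Complex.abs_conj,
        Complex.abs_ofReal (d l), abs_of_pos (hdpos l), hMbdef]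
      have h8 : (0:ℝ) ≤ Complex.abs z := Complex.abs.nonneg z
      refine div_le_div₀ ?_ ?_ (by positivity) ?_
      · have h9 : (0:ℝ) ≤ Complex.abs z * (lo + hi) := mul_nonneg h8 (by linarith)
        nlinarith
      · exact mul_le_mul (htbd l) (hwbd l) (Complex.abs.nonneg _) (by linarith)
      · simp only [hddef]
        exact le_max_right _ _
    -- apply the weak-convergence hypothesis to the real and imaginary parts
    obtain ⟨Φre, hΦre⟩ : ∃ Φre : BoundedContinuousFunction ℝ ℝ,
        Φre = BoundedContinuousFunction.ofNormedAddCommGroup (fun l => (φ l).re)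
          (Complex.continuous_re.comp hφc) Mb (fun l => by
            rw [Real.norm_eq_abs]
            exact (Complex.abs_re_le_abs _).trans (hφbd l)) := ⟨_, rfl⟩
    obtain ⟨Φim, hΦim⟩ : ∃ Φim : BoundedContinuousFunction ℝ ℝ,
        Φim = BoundedContinuousFunction.ofNormedAddCommGroup (fun l => (φ l).im)
          (Complex.continuous_im.comp hφc) Mb (fun l => by
            rw [Real.norm_eq_abs]
            exact (Complex.abs_im_le_abs _).trans (hφbd l)) := ⟨_, rfl⟩
    have h1 := hweak Φre
    have h2 := hweak Φim
    simp only [hΦre, hΦim, BoundedContinuousFunction.coe_ofNormedAddCommGroup] at h1 h2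
    have hφint : Integrable φ ν := by
      refine Integrable.mono' (integrable_const Mb) hφc.aestronglyMeasurable
        (ae_of_all _ fun l => ?_)
      exact hφbd l
    have hco : Continuous (fun x : ℝ => (x : ℂ)) := Complex.continuous_ofReal
    have h3 : Tendsto (fun N => ((((n N:ℝ))⁻¹ * ∑ j, (φ (lam N j)).re : ℝ) : ℂ)
        + ((((n N:ℝ))⁻¹ * ∑ j, (φ (lam N j)).im : ℝ) : ℂ) * Complex.I) atTop
        (𝓝 (((∫ x, (φ x).re ∂ν : ℝ) : ℂ) + ((∫ x, (φ x).im ∂ν : ℝ) : ℂ) * Complex.I)) :=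
      ((hco.tendsto _).comp h1).add (((hco.tendsto _).comp h2).mul_const _)
    have hfun : ∀ N : ℕ, ((((n N:ℝ))⁻¹ * ∑ j, (φ (lam N j)).re : ℝ) : ℂ)
        + ((((n N:ℝ))⁻¹ * ∑ j, (φ (lam N j)).im : ℝ) : ℂ) * Complex.I
        = ((n N : ℂ))⁻¹ * ∑ j, φ (lam N j) := by
      intro N
      have hcast : ((n N : ℂ))⁻¹ = ((((n N : ℝ))⁻¹ : ℝ) : ℂ) := by push_cast; ring
      rw [hcast, Complex.ext_iff]
      constructor
      · simp [Complex.re_ofReal_mul, Complex.re_sum]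
      · simp [Complex.im_ofReal_mul, Complex.im_sum]
    have hlim : (∫ l, φ l ∂ν)
        = ((∫ x, (φ x).re ∂ν : ℝ) : ℂ) + ((∫ x, (φ x).im ∂ν : ℝ) : ℂ) * Complex.I := by
      have h4 := integral_coe_re_add_coe_im (μ := ν) (𝕜 := ℂ) hφint
      rw [← h4, integral_ofReal, integral_ofReal]
      rfl
    have hSφ : Tendsto (fun N => ((n N : ℂ))⁻¹ * ∑ j, φ (lam N j)) atTop
        (𝓝 (∫ l, φ l ∂ν)) := by
      rw [hlim]
      exact Tendsto.congr hfun h3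
    -- transfer back to the original integrand
    have hint₂ : (fun l : ℝ => (l:ℂ) / (1 - z * l)) =ᵐ[ν] φ := by
      filter_upwards [hae] with l hl
      have h5 := hsub hl
      exact (hφeq l (hlodef ▸ ((min_le_right ε₀ a).trans h5.1))
        (hhidef ▸ (h5.2.trans (le_max_right C b)))
        (hqdef ▸ ((min_le_left m m₁).trans (hm_bound z hz l hl)))).symm
    have hInt : Integrable (fun l : ℝ => (l:ℂ) / (1 - z * l)) ν := hφint.congr hint₂.symm
    have hIeq : (∫ l, (l:ℂ) / (1 - z * l) ∂ν) = ∫ l, φ l ∂ν := integral_congr_ae hint₂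
    refine ⟨hInt, ?_⟩
    have hmain : Tendsto (fun N => ((((n N:ℝ) / N : ℝ)) : ℂ)
        * (((n N : ℂ))⁻¹ * ∑ j, φ (lam N j))) atTop (𝓝 ((γ:ℂ) * ∫ l, φ l ∂ν)) :=
      ((hco.tendsto γ).comp hn).mul hSφ
    have hev : (fun N => ((((n N:ℝ) / N : ℝ)) : ℂ) * (((n N : ℂ))⁻¹ * ∑ j, φ (lam N j)))
        =ᶠ[atTop] (fun N => ((N:ℂ))⁻¹ * ∑ j, (lam N j : ℂ) / (1 - z * lam N j)) := by
      filter_upwards [hcond] with N hN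
      obtain ⟨hc1, hc2, hc3, hc4, hc5⟩ := hN
      have hsum : (∑ j, φ (lam N j)) = ∑ j, (lam N j : ℂ) / (1 - z * lam N j) :=
        Finset.sum_congr rfl fun j _ => hφeq _ (hlodef ▸ ((min_le_left ε₀ a).trans (hc1 j)))
          (hhidef ▸ ((hC N j).trans (le_max_left C b)))
          (hqdef ▸ ((min_le_right m m₁).trans (hm1_bound _ (hc1 j) (hc2 j) z hz)))
      rw [hsum]
      have hn0 : ((n N : ℂ)) ≠ 0 := Nat.cast_ne_zero.2 hc3.ne'
      rw [← mul_assoc]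
      congr 1
      push_cast
      rw [div_eq_mul_inv, mul_comm ((n N : ℂ)), mul_assoc, mul_inv_cancel₀ hn0, mul_one]
    have hfin := hmain.congr' hev
    simp only [hgNC, hgC]
    rw [hIeq]
    exact hfin.const_add _
  -- Lipschitz constants
  obtain ⟨L₁, hL₁def⟩ : ∃ L₁ : ℝ, L₁ = r₀⁻¹ * r₀⁻¹ := ⟨_, rfl⟩
  have hL₁0 : 0 ≤ L₁ := by rw [hL₁def]; positivity
  obtain ⟨Kc, hKcdef⟩ : ∃ Kc : ℝ, Kc = C * C / (m₁ * m₁) := ⟨_, rfl⟩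
  have hKc0 : 0 ≤ Kc := by
    rw [hKcdef]
    exact div_nonneg (by positivity) (by positivity)
  obtain ⟨L₂, hL₂def⟩ : ∃ L₂ : ℝ, L₂ = (γ + 1) * Kc := ⟨_, rfl⟩
  have hL₂0 : 0 ≤ L₂ := by rw [hL₂def]; exact mul_nonneg (by linarith) hKc0
  obtain ⟨L, hLdef⟩ : ∃ L : ℝ, L = L₁ + L₂ := ⟨_, rfl⟩
  have hL0 : 0 ≤ L := by rw [hLdef]; linarith
  obtain ⟨Kb, hKbdef⟩ : ∃ Kb : ℝ, Kb = b * b / (m * m) := ⟨_, rfl⟩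
  have hKb0 : 0 ≤ Kb := by
    rw [hKbdef]
    exact div_nonneg (by positivity) (by positivity)
  obtain ⟨L', hL'def⟩ : ∃ L' : ℝ, L' = L₁ + γ * Kb := ⟨_, rfl⟩
  have hL'0 : 0 ≤ L' := by
    rw [hL'def]
    have := mul_nonneg hγ.le hKb0
    linarith
  -- the inverse map is Lipschitz on the disc
  have hinv_lip : ∀ z ∈ Metric.closedBall (c:ℂ) δ, ∀ u ∈ Metric.closedBall (c:ℂ) δ,
      Complex.abs (z⁻¹ - u⁻¹) ≤ L₁ * Complex.abs (z - u) := by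
    intro z hz u hu
    have hz1 : r₀ ≤ Complex.abs z := habs_z z hz
    have hu1 : r₀ ≤ Complex.abs u := habs_z u hu
    have hzne : z ≠ 0 := by
      intro h
      rw [h, map_zero] at hz1
      linarith
    have hune : u ≠ 0 := by
      intro h
      rw [h, map_zero] at hu1
      linarith
    have e : z⁻¹ - u⁻¹ = (u - z) / (z * u) := by
      field_simp
    rw [e, map_div₀, map_mul]
    have e2 : Complex.abs (u - z) = Complex.abs (z - u) := by
      rw [← neg_sub, map_neg_eq_map]
    rw [e2]
    have h5 : Complex.abs (z - u) / (Complex.abs z * Complex.abs u)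
        ≤ Complex.abs (z - u) / (r₀ * r₀) := by
      gcongr Complex.abs (z - u) / ?_
      exact mul_le_mul hz1 hu1 hr₀.le (Complex.abs.nonneg _)
    refine h5.trans (le_of_eq ?_)
    rw [hL₁def]
    field_simp
  -- g_N is Lipschitz on the disc, eventually
  have hgN_lip : ∀ N : ℕ, (∀ j, ε₀ ≤ lam N j) → (∀ j, ε ≤ |c - (lam N j)⁻¹|) →
      (n N : ℝ) / N ≤ γ + 1 → ∀ z ∈ Metric.closedBall (c:ℂ) δ,
      ∀ u ∈ Metric.closedBall (c:ℂ) δ,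
      Complex.abs (gNC N z - gNC N u) ≤ L * Complex.abs (z - u) := by
    intro N h1 h2 h5 z hz u hu
    simp only [hgNC]
    have e : (z⁻¹ + ((N:ℂ))⁻¹ * ∑ j, (lam N j:ℂ) / (1 - z * lam N j))
           - (u⁻¹ + ((N:ℂ))⁻¹ * ∑ j, (lam N j:ℂ) / (1 - u * lam N j))
        = (z⁻¹ - u⁻¹) + ((N:ℂ))⁻¹ *
            ∑ j, ((lam N j:ℂ) / (1 - z * lam N j) - (lam N j:ℂ) / (1 - u * lam N j)) := by
      rw [Finset.sum_sub_distrib]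
      ring
    rw [e]
    have hterm2 : ∀ j, Complex.abs ((lam N j:ℂ) / (1 - z * lam N j)
        - (lam N j:ℂ) / (1 - u * lam N j)) ≤ Kc * Complex.abs (z - u) := by
      intro j
      refine (hterm z u (lam N j) m₁ m₁ hm₁0 hm₁0 (hlam_pos N j).le
        (hm1_bound _ (h1 j) (h2 j) z hz) (hm1_bound _ (h1 j) (h2 j) u hu)).trans ?_
      refine mul_le_mul_of_nonneg_right ?_ (Complex.abs.nonneg _)
      rw [hKcdef]
      refine div_le_div₀ (by positivity) ?_ (by positivity) le_rfl
      have h6 := hlam_pos N j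
      have h7 := hC N j
      nlinarith
    have hsum : Complex.abs (∑ j, ((lam N j:ℂ) / (1 - z * lam N j)
        - (lam N j:ℂ) / (1 - u * lam N j))) ≤ (n N : ℝ) * (Kc * Complex.abs (z - u)) := by
      refine (AbsoluteValue.sum_le Complex.abs _ _).trans ?_
      calc (∑ j, Complex.abs ((lam N j:ℂ) / (1 - z * lam N j)
            - (lam N j:ℂ) / (1 - u * lam N j)))
          ≤ ∑ _j : Fin (n N), Kc * Complex.abs (z - u) :=
            Finset.sum_le_sum fun j _ => hterm2 j
        _ = (n N : ℝ) * (Kc * Complex.abs (z - u)) := by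
            rw [Finset.sum_const, Finset.card_univ, Fintype.card_fin, nsmul_eq_mul]
    have habsN : Complex.abs (((N:ℂ))⁻¹) = ((N:ℝ))⁻¹ := by
      rw [map_inv₀, Complex.abs_natCast]
    calc Complex.abs ((z⁻¹ - u⁻¹) + ((N:ℂ))⁻¹ *
            ∑ j, ((lam N j:ℂ) / (1 - z * lam N j) - (lam N j:ℂ) / (1 - u * lam N j)))
        ≤ Complex.abs (z⁻¹ - u⁻¹) + Complex.abs (((N:ℂ))⁻¹ *
            ∑ j, ((lam N j:ℂ) / (1 - z * lam N j) - (lam N j:ℂ) / (1 - u * lam N j))) :=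
          Complex.abs.add_le _ _
      _ ≤ L₁ * Complex.abs (z - u) + ((N:ℝ))⁻¹ * ((n N : ℝ) * (Kc * Complex.abs (z - u))) := by
          refine add_le_add (hinv_lip z hz u hu) ?_
          rw [map_mul, habsN]
          exact mul_le_mul_of_nonneg_left hsum (by positivity)
      _ ≤ L₁ * Complex.abs (z - u) + L₂ * Complex.abs (z - u) := by
          refine add_le_add le_rfl ?_
          have e3 : ((N:ℝ))⁻¹ * ((n N : ℝ) * (Kc * Complex.abs (z - u)))
              = ((n N : ℝ) / N) * (Kc * Complex.abs (z - u)) := by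
            rw [div_eq_mul_inv]
            ring
          rw [e3, hL₂def, mul_assoc]
          refine mul_le_mul_of_nonneg_right h5 ?_
          exact mul_nonneg hKc0 (Complex.abs.nonneg _)
      _ = L * Complex.abs (z - u) := by rw [hLdef]; ring
  -- g is Lipschitz on the disc
  have hg_lip : ∀ z ∈ Metric.closedBall (c:ℂ) δ, ∀ u ∈ Metric.closedBall (c:ℂ) δ,
      Complex.abs (gC z - gC u) ≤ L' * Complex.abs (z - u) := by
    intro z hz u hu
    simp only [hgC]
    have hIz := (key z hz).1
    have hIu := (key u hu).1
    have e : (z⁻¹ + (γ:ℂ) * ∫ l, (l:ℂ) / (1 - z * l) ∂ν)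
           - (u⁻¹ + (γ:ℂ) * ∫ l, (l:ℂ) / (1 - u * l) ∂ν)
        = (z⁻¹ - u⁻¹) + (γ:ℂ) * ∫ l, ((l:ℂ) / (1 - z * l) - (l:ℂ) / (1 - u * l)) ∂ν := by
      rw [integral_sub hIz hIu]
      ring
    rw [e]
    have hIbound : ‖∫ l, ((l:ℂ) / (1 - z * l) - (l:ℂ) / (1 - u * l)) ∂ν‖
        ≤ (Kb * Complex.abs (z - u)) * (ν Set.univ).toReal := by
      refine norm_integral_le_of_norm_le_const ?_
      filter_upwards [hae] with l hl
      have h6 := hsub hl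
      have h7 := hterm z u l m m hm0 hm0 (le_of_lt (hν_pos hl)) (hm_bound z hz l hl)
        (hm_bound u hu l hl)
      refine h7.trans ?_
      refine mul_le_mul_of_nonneg_right ?_ (Complex.abs.nonneg _)
      rw [hKbdef]
      refine div_le_div₀ (by positivity) ?_ (mul_pos hm0 hm0) le_rfl
      have h8 := h6.1
      have h9 := h6.2
      nlinarith
    rw [measure_univ, ENNReal.toReal_one, mul_one] at hIbound
    calc Complex.abs ((z⁻¹ - u⁻¹) + (γ:ℂ) * ∫ l, ((l:ℂ) / (1 - z * l) - (l:ℂ) / (1 - u * l)) ∂ν)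
        ≤ Complex.abs (z⁻¹ - u⁻¹)
          + Complex.abs ((γ:ℂ) * ∫ l, ((l:ℂ) / (1 - z * l) - (l:ℂ) / (1 - u * l)) ∂ν) :=
          Complex.abs.add_le _ _
      _ ≤ L₁ * Complex.abs (z - u) + γ * (Kb * Complex.abs (z - u)) := by
          refine add_le_add (hinv_lip z hz u hu) ?_
          rw [map_mul, Complex.abs_ofReal, abs_of_pos hγ]
          exact mul_le_mul_of_nonneg_left hIbound hγ.le
      _ = L' * Complex.abs (z - u) := by rw [hL'def]; ring
  -- assemble the conclusion
  refine ⟨δ, hδ0, ?_, F2, ?_⟩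
  · filter_upwards [hcond] with N hN
    obtain ⟨h1, h2, _, _, _⟩ := hN
    refine ⟨h0B, ?_, ?_⟩
    · intro j hmem
      rw [Metric.mem_closedBall] at hmem
      have e1 : ((lam N j : ℂ))⁻¹ = (((lam N j)⁻¹ : ℝ) : ℂ) := (Complex.ofReal_inv _).symm
      rw [e1, Complex.dist_eq, ← Complex.ofReal_sub, Complex.norm_real, Real.norm_eq_abs, abs_sub_comm] at hmem
      have h3 := h2 j
      linarith
    · simp only [hgNC]
      apply DifferentiableOn.add
      · intro x hx
        exact (differentiableAt_inv (fun h => h0B (h ▸ hx))).differentiableWithinAt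
      · apply DifferentiableOn.const_mul
        apply DifferentiableOn.fun_sum
        intro j _
        refine DifferentiableOn.div (differentiableOn_const _)
          (((differentiable_const (1:ℂ)).sub (differentiable_id.mul_const _)).differentiableOn) ?_
        intro x hx
        intro hzero
        have h3 := hm1_bound _ (h1 j) (h2 j) x hx
        rw [hzero, map_zero] at h3
        linarith
  · rw [Metric.tendstoUniformlyOn_iff]
    intro ep hep
    have hden : (0:ℝ) < 3 * (L + L' + 1) := by linarith
    obtain ⟨rr, hrrdef⟩ : ∃ rr : ℝ, rr = ep / (3 * (L + L' + 1)) := ⟨_, rfl⟩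
    have hrr0 : 0 < rr := by rw [hrrdef]; exact div_pos hep hden
    obtain ⟨T, hTB, hTfin, hTcover⟩ :=
      Metric.finite_approx_of_totallyBounded (isCompact_closedBall ((c:ℝ):ℂ) δ).totallyBounded rr hrr0
    have hptw : ∀ y ∈ T, ∀ᶠ N in atTop, dist (gC y) (gNC N y) < ep / 3 := by
      intro y hy
      have h8 := (key y (hTB hy)).2
      have h9 := Metric.tendsto_nhds.1 h8 (ep/3) (by positivity)
      filter_upwards [h9] with N hN
      rw [dist_comm]
      exact hN
    filter_upwards [(hTfin.eventually_all).2 hptw, hcond] with N hN1 hN2 z hz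
    show dist (gC z) (gNC N z) < ep
    obtain ⟨y, hyT, hzy⟩ : ∃ y ∈ T, z ∈ Metric.ball y rr := by
      have h10 := hTcover hz
      simpa using h10
    have hyB := hTB hyT
    have d1 : dist (gC z) (gC y) ≤ L' * rr := by
      rw [Complex.dist_eq]
      refine (hg_lip z hz y hyB).trans ?_
      refine mul_le_mul_of_nonneg_left ?_ hL'0
      have h11 := Metric.mem_ball.1 hzy
      rw [Complex.dist_eq] at h11
      exact h11.le
    have d2 : dist (gC y) (gNC N y) < ep/3 := hN1 y hyT
    have d3 : dist (gNC N y) (gNC N z) ≤ L * rr := by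
      rw [Complex.dist_eq]
      refine (hgN_lip N hN2.1 hN2.2.1 hN2.2.2.2.2 y hyB z hz).trans ?_
      refine mul_le_mul_of_nonneg_left ?_ hL0
      have h11 := Metric.mem_ball.1 hzy
      rw [dist_comm, Complex.dist_eq] at h11
      exact h11.le
    have htri := dist_triangle4 (gC z) (gC y) (gNC N y) (gNC N z)
    have hkey2 : L * rr + L' * rr + rr = ep / 3 := by
      rw [hrrdef]
      field_simp
    linarith

end
end

section
/- Suppose 𝔠 ∈ D satisfies the regularity condition, g'(𝔠) = 0 and g''(𝔠) = 0 (whence g'''(𝔠) > 0). Then there exists a sequence (𝔠_N) of real numbers converging to 𝔠 such that, for every sufficiently large N: 𝔠_N ∈ D, g_N''(𝔠_N) = 0 and g_N'''(𝔠_N) > 0; moreover g_N(𝔠_N) → g(𝔠) and g_N'(𝔠_N) → 0 as N → ∞. The sequence is unique up to finitely many terms: any real sequence (𝔠'_N) converging to 𝔠 with g_N''(𝔠'_N) = 0 for all sufficiently large N satisfies 𝔠'_N = 𝔠_N for all sufficiently large N. -/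
open MeasureTheory Filter Topology
open scoped ENNReal Classical

noncomputable section

lemma msupport_pos (μ : Measure ℝ) [IsProbabilityMeasure μ] : 0 < μ (msupport μ) := by
  by_contra h
  push_neg at h
  have h0 : μ (msupport μ) = 0 := le_antisymm h zero_le
  have : (1 : ℝ≥0∞) = μ Set.univ := (measure_univ).symm
  have hle : μ Set.univ ≤ μ (msupport μ) + μ (msupport μ)ᶜ := by
    rw [← Set.union_compl_self (msupport μ)]
    exact measure_union_le _ _
  rw [h0, msupport_compl_null, add_zero, measure_univ] at hle
  exact absurd hle (by simp)

lemma ae_mem_msupport (μ : Measure ℝ) : ∀ᵐ l ∂μ, l ∈ msupport μ := by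
  rw [MeasureTheory.ae_iff]
  exact msupport_compl_null μ

/-- the building block -/
def phif (k : ℕ) (z l : ℝ) : ℝ := (l / (1 - z * l)) ^ k

lemma phif_measurable (k : ℕ) (z : ℝ) : Measurable (fun l => phif k z l) := by
  unfold phif
  exact ((measurable_id.div ((measurable_const.sub (measurable_const.mul measurable_id))))).pow_const k

lemma hasDerivAt_invpow (m : ℕ) {z : ℝ} (hz : z ≠ 0) :
    HasDerivAt (fun w : ℝ => (w⁻¹) ^ (m + 1)) (-((m : ℝ) + 1) * (z⁻¹) ^ (m + 2)) z := by
  have h := ((hasDerivAt_inv hz).fun_pow (m + 1))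
  refine h.congr_deriv ?_
  simp only [Nat.add_sub_cancel, ← inv_pow]
  push_cast
  ring

lemma hasDerivAt_phif (k : ℕ) {z l : ℝ} (h : 1 - z * l ≠ 0) :
    HasDerivAt (fun w => phif (k + 1) w l) (((k : ℝ) + 1) * phif (k + 2) z l) z := by
  have hden : HasDerivAt (fun w : ℝ => 1 - w * l) (-l) z := by
    simpa using ((hasDerivAt_id z).mul_const l).const_sub 1
  have hinv := hden.inv h
  have hu : HasDerivAt (fun w => l / (1 - w * l)) (l * (- -l / (1 - z * l) ^ 2)) z := by
    simpa [div_eq_mul_inv] using hinv.const_mul l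
  have h2 := hu.fun_pow (k + 1)
  refine h2.congr_deriv ?_
  unfold phif
  push_cast
  simp only [div_eq_mul_inv, ← inv_pow]
  ring

lemma iter_eq (F : ℕ → ℝ → ℝ) (s : Set ℝ) (hs : IsOpen s) (m : ℕ)
    (h : ∀ k < m, ∀ z ∈ s, HasDerivAt (F k) (F (k + 1) z) z) :
    ∀ z ∈ s, iteratedDeriv m (F 0) z = F m z := by
  induction m with
  | zero => intro z _; simp
  | succ m ih =>
    intro z hz
    rw [iteratedDeriv_succ]
    have h1 : ∀ w ∈ s, iteratedDeriv m (F 0) w = F m w :=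
      ih fun k hk => h k (hk.trans (Nat.lt_succ_self m))
    have heq : deriv (iteratedDeriv m (F 0)) z = deriv (F m) z := by
      apply Filter.EventuallyEq.deriv_eq
      filter_upwards [hs.mem_nhds hz] with w hw using h1 w hw
    rw [heq, (h m (Nat.lt_succ_self m) z hz).deriv]

lemma phif_abs_le {k : ℕ} {z l b' m' : ℝ} (hm : 0 < m') (hb : |l| ≤ b') (h1 : m' ≤ |1 - z * l|) :
    |phif k z l| ≤ (b' / m') ^ k := by
  unfold phif
  rw [abs_pow]
  apply pow_le_pow_left₀ (abs_nonneg _)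
  rw [abs_div]
  exact div_le_div₀ ((abs_nonneg l).trans hb) hb hm h1

lemma phif_integrable (ν : Measure ℝ) [IsProbabilityMeasure ν] (k : ℕ) {z b' m' : ℝ}
    (hm : 0 < m') (hb : ∀ᵐ l ∂ν, |l| ≤ b' ∧ m' ≤ |1 - z * l|) :
    Integrable (phif k z) ν := by
  apply Integrable.mono' (integrable_const ((b' / m') ^ k)) (phif_measurable k z).aestronglyMeasurable
  filter_upwards [hb] with l ⟨h1, h2⟩
  exact phif_abs_le hm h1 h2

lemma phif_integral_abs_le (ν : Measure ℝ) [IsProbabilityMeasure ν] (k : ℕ) {z b' m' : ℝ}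
    (hm : 0 < m') (hb : ∀ᵐ l ∂ν, |l| ≤ b' ∧ m' ≤ |1 - z * l|) :
    |∫ l, phif k z l ∂ν| ≤ (b' / m') ^ k := by
  have := MeasureTheory.norm_integral_le_of_norm_le_const (μ := ν)
    (f := fun l => phif k z l) (C := (b' / m') ^ k) ?_
  · simpa using this
  · filter_upwards [hb] with l ⟨h1, h2⟩
    simpa using phif_abs_le hm h1 h2

def GNf (n : ℕ → ℕ) (lam : (N : ℕ) → Fin (n N) → ℝ) (N k : ℕ) (z : ℝ) : ℝ :=
  (-1) ^ k * (Nat.factorial k) * (z⁻¹) ^ (k + 1) +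
    (Nat.factorial k) * ((N : ℝ)⁻¹ * ∑ j, phif (k + 1) z (lam N j))

def Gf (γ : ℝ) (ν : Measure ℝ) (k : ℕ) (z : ℝ) : ℝ :=
  (-1) ^ k * (Nat.factorial k) * (z⁻¹) ^ (k + 1) +
    (Nat.factorial k) * (γ * ∫ l, phif (k + 1) z l ∂ν)

lemma hasDerivAt_GNf (n : ℕ → ℕ) (lam : (N : ℕ) → Fin (n N) → ℝ) (N k : ℕ) {z : ℝ}
    (hz : z ≠ 0) (hl : ∀ j, 1 - z * lam N j ≠ 0) :
    HasDerivAt (GNf n lam N k) (GNf n lam N (k + 1) z) z := by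
  have h1 := (hasDerivAt_invpow k hz).const_mul ((-1 : ℝ) ^ k * (Nat.factorial k))
  have h2 : HasDerivAt (fun w => (N : ℝ)⁻¹ * ∑ j, phif (k + 1) w (lam N j))
      ((N : ℝ)⁻¹ * ∑ j, ((k : ℝ) + 1) * phif (k + 2) z (lam N j)) z :=
    (HasDerivAt.fun_sum fun j _ => hasDerivAt_phif k (hl j)).const_mul _
  have h3 := h1.add (h2.const_mul ((Nat.factorial k : ℝ)))
  refine h3.congr_deriv ?_
  unfold GNf
  rw [← Finset.mul_sum, Nat.factorial_succ]
  push_cast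
  ring

lemma hasDerivAt_Gf (γ : ℝ) (ν : Measure ℝ) [IsProbabilityMeasure ν] (k : ℕ)
    {z₀ ε b' m' : ℝ} (hε : 0 < ε) (hm : 0 < m')
    (hb : ∀ᵐ l ∂ν, |l| ≤ b' ∧ ∀ x ∈ Metric.ball z₀ ε, m' ≤ |1 - x * l|)
    (hz : z₀ ≠ 0) :
    HasDerivAt (Gf γ ν k) (Gf γ ν (k + 1) z₀) z₀ := by
  have hball : z₀ ∈ Metric.ball z₀ ε := Metric.mem_ball_self hε
  have key := hasDerivAt_integral_of_dominated_loc_of_deriv_le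
    (μ := ν) (F := fun x l => phif (k + 1) x l)
    (F' := fun x l => ((k : ℝ) + 1) * phif (k + 2) x l)
    (bound := fun _ => ((k : ℝ) + 1) * (b' / m') ^ (k + 2)) (x₀ := z₀) (s := Metric.ball z₀ ε) (Metric.ball_mem_nhds z₀ hε)
    (Eventually.of_forall fun x => (phif_measurable (k + 1) x).aestronglyMeasurable)
    (phif_integrable ν (k + 1) hm (hb.mono fun l ⟨h1, h2⟩ => ⟨h1, h2 z₀ hball⟩))
    ((measurable_const.mul (phif_measurable (k + 2) z₀)).aestronglyMeasurable)
    ?_ (integrable_const _) ?_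
  · have h1 := (hasDerivAt_invpow k hz).const_mul ((-1 : ℝ) ^ k * (Nat.factorial k))
    have h2 := (key.2.const_mul γ).const_mul ((Nat.factorial k : ℝ))
    have h3 := h1.add h2
    refine h3.congr_deriv ?_
    unfold Gf
    rw [MeasureTheory.integral_const_mul, Nat.factorial_succ]
    push_cast
    ring
  · filter_upwards [hb] with l ⟨h1, h2⟩
    intro x hx
    rw [norm_mul]
    have : ‖((k : ℝ) + 1)‖ = (k : ℝ) + 1 := by
      rw [Real.norm_eq_abs, abs_of_nonneg (by positivity)]
    rw [this]
    apply mul_le_mul_of_nonneg_left _ (by positivity)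
    rw [Real.norm_eq_abs]
    exact phif_abs_le hm h1 (h2 x hx)
  · filter_upwards [hb] with l ⟨h1, h2⟩
    intro x hx
    have hne : 1 - x * l ≠ 0 := by
      intro h0
      have := h2 x hx
      rw [h0, abs_zero] at this
      exact absurd this (not_le.2 hm)
    exact hasDerivAt_phif k hne


set_option maxHeartbeats 1000000 in
/-- Finite-`N` approximation of a regular cusp-point preimage: if `𝔠 ∈ D` is
regular with `g'(𝔠) = g''(𝔠) = 0` (whence `g'''(𝔠) > 0`), there is a sequence `𝔠_N → 𝔠` of
zeros of `g_N''` with `g_N'''(𝔠_N) > 0`, `g_N(𝔠_N) → g(𝔠)`, `g_N'(𝔠_N) → 0`, unique up to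
finitely many terms. -/
theorem cusp_finite_N_approximation
    (γ : ℝ) (hγ : 0 < γ)
    (ν : Measure ℝ) [IsProbabilityMeasure ν]
    (hν_comp : IsCompact (msupport ν)) (hν_pos : msupport ν ⊆ Set.Ioi 0)
    (n : ℕ → ℕ) (hn : Tendsto (fun N => (n N : ℝ) / N) atTop (nhds γ))
    (lam : (N : ℕ) → Fin (n N) → ℝ)
    (hlam_mono : ∀ N, Monotone (lam N))
    (hlam_pos : ∀ N j, 0 < lam N j)
    (hlam_inf : ∃ ε > 0, ∀ᶠ N in atTop, ∀ j, ε ≤ lam N j)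
    (hlam_sup : ∃ C : ℝ, ∀ N, ∀ j, lam N j ≤ C)
    (hweak : ∀ f : BoundedContinuousFunction ℝ ℝ,
      Tendsto (fun N => (n N : ℝ)⁻¹ * ∑ j, f (lam N j)) atTop (nhds (∫ x, f x ∂ν)))
    -- the functions g_N and g
    (g : ℝ → ℝ) (hg : g = fun w => w⁻¹ + γ * ∫ l, l / (1 - w * l) ∂ν)
    (gN : ℕ → ℝ → ℝ)
    (hgN : gN = fun (N : ℕ) (z : ℝ) => z⁻¹ + (N : ℝ)⁻¹ * ∑ j, lam N j / (1 - z * lam N j))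
    (Dset : Set ℝ) (hD : Dset = {x : ℝ | x ≠ 0 ∧ x⁻¹ ∉ msupport ν})
    -- the point 𝔠 and the regularity condition
    (c : ℝ) (hcD : c ∈ Dset)
    (hreg : ∃ ε > 0, ∀ᶠ N in atTop, ∀ j, ε ≤ |c - (lam N j)⁻¹|)
    (hg1 : deriv g c = 0) (hg2 : iteratedDeriv 2 g c = 0) :
    0 < iteratedDeriv 3 g c ∧
    ∃ cN : ℕ → ℝ,
      Tendsto cN atTop (nhds c) ∧
      (∀ᶠ N in atTop,
        cN N ∈ Dset ∧ iteratedDeriv 2 (gN N) (cN N) = 0 ∧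
        0 < iteratedDeriv 3 (gN N) (cN N)) ∧
      Tendsto (fun N => gN N (cN N)) atTop (nhds (g c)) ∧
      Tendsto (fun N => deriv (gN N) (cN N)) atTop (nhds 0) ∧
      (∀ cN' : ℕ → ℝ, Tendsto cN' atTop (nhds c) →
        (∀ᶠ N in atTop, iteratedDeriv 2 (gN N) (cN' N) = 0) →
        ∀ᶠ N in atTop, cN' N = cN N) := by
  -- basic point facts
  rw [hD] at hcD
  obtain ⟨hc0, hcinv⟩ := hcD
  have hsupp_pos := msupport_pos ν
  have hsupp_ne : (msupport ν).Nonempty := MeasureTheory.nonempty_of_measure_ne_zero hsupp_pos.ne'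
  -- upper and lower bounds for the support
  set b : ℝ := sSup (msupport ν) with hbdef
  have hble : ∀ l ∈ msupport ν, l ≤ b := fun l hl => le_csSup hν_comp.bddAbove hl
  have hbpos : 0 < b := hν_pos (hν_comp.sSup_mem hsupp_ne)
  set a : ℝ := sInf (msupport ν) with hadef
  have hale : ∀ l ∈ msupport ν, a ≤ l := fun l hl => csInf_le hν_comp.bddBelow hl
  have hapos : 0 < a := hν_pos (hν_comp.sInf_mem hsupp_ne)
  -- the distance from c to the inverted support
  obtain ⟨l₀, hl₀, hl₀min⟩ : ∃ l₀ ∈ msupport ν, ∀ l ∈ msupport ν, |c - l₀⁻¹| ≤ |c - l⁻¹| := by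
    obtain ⟨l₀, hl₀, hmin⟩ := hν_comp.exists_isMinOn hsupp_ne
      (continuousOn_const.sub (continuousOn_id.inv₀ (fun l hl => (hν_pos hl).ne'))).abs
    exact ⟨l₀, hl₀, fun l hl => hmin hl⟩
  set ρ : ℝ := |c - l₀⁻¹| with hρdef
  have hρ : ∀ l ∈ msupport ν, ρ ≤ |c - l⁻¹| := hl₀min
  have hρpos : 0 < ρ := by
    rw [hρdef, abs_pos, sub_ne_zero]
    intro h
    exact hcinv (by rw [h, inv_inv]; exact hl₀)
  obtain ⟨ε0, hε0, hev0⟩ := hlam_inf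
  obtain ⟨ε1, hε1, hev1⟩ := hreg
  obtain ⟨C0, hC0⟩ := hlam_sup
  set C : ℝ := max 1 C0 with hCdef
  have hC : ∀ N j, lam N j ≤ C := fun N j => (hC0 N j).trans (le_max_right _ _)
  have hCpos : (0:ℝ) < C := lt_of_lt_of_le one_pos (le_max_left _ _)
  -- radius
  set r2 : ℝ := min (|c|/2) (min (ρ/2) (ε1/2)) with hr2def
  have hr2pos : 0 < r2 := by
    apply lt_min (by positivity) (lt_min (by positivity) (by positivity))
  have hr2c : r2 ≤ |c|/2 := min_le_left _ _
  have hr2ρ : r2 ≤ ρ/2 := (min_le_right _ _).trans (min_le_left _ _)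
  have hr2ε1 : r2 ≤ ε1/2 := (min_le_right _ _).trans (min_le_right _ _)
  set z0 : ℝ := |c|/2 with hz0def
  have hz0pos : 0 < z0 := by rw [hz0def]; positivity
  set J : Set ℝ := Metric.closedBall c r2 with hJdef
  have hJz : ∀ z ∈ J, z0 ≤ |z| ∧ z ≠ 0 := by
    intro z hz
    rw [hJdef, Metric.mem_closedBall, Real.dist_eq] at hz
    have h1 : z0 ≤ |z| := by
      have := abs_sub_abs_le_abs_sub c z
      rw [abs_sub_comm] at this
      rw [hz0def]
      linarith [hr2c, hz, this]
    exact ⟨h1, fun h => by rw [h, abs_zero] at h1; linarith⟩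
  -- the basic lower bound machine
  have hlow : ∀ z ∈ J, ∀ (l e q : ℝ), 0 < l → 0 ≤ e → e ≤ l → q ≤ |c - l⁻¹| → r2 ≤ q/2 →
      e * (q/2) ≤ |1 - z * l| := by
    intro z hz l e q hl he hel hq hr2q
    rw [hJdef, Metric.mem_closedBall, Real.dist_eq] at hz
    have h1 : 1 - z * l = -(l * (z - l⁻¹)) := by field_simp; ring
    rw [h1, abs_neg, abs_mul, abs_of_pos hl]
    have h2 : q/2 ≤ |z - l⁻¹| := by
      have h3 : |c - l⁻¹| - |z - c| ≤ |z - l⁻¹| := by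
        have := abs_sub_abs_le_abs_sub (c - l⁻¹) (c - z)
        have h4 : (c - l⁻¹) - (c - z) = z - l⁻¹ := by ring
        rw [h4] at this
        rw [abs_sub_comm z c]
        linarith [abs_abs_sub_abs_le_abs_sub (c - l⁻¹) (c - z)]
      linarith
    calc e * (q/2) ≤ l * |z - l⁻¹| :=
          mul_le_mul hel h2 (by linarith) hl.le
      _ = l * |z - l⁻¹| := rfl
  set m0 : ℝ := a * (ρ/2) with hm0def
  have hm0pos : 0 < m0 := by rw [hm0def]; positivity
  have hm0 : ∀ z ∈ J, ∀ l ∈ msupport ν, m0 ≤ |1 - z * l| :=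
    fun z hz l hl => hlow z hz l a ρ (hν_pos hl) hapos.le (hale l hl) (hρ l hl) hr2ρ
  set m1 : ℝ := ε0 * (ε1/2) with hm1def
  have hm1pos : 0 < m1 := by rw [hm1def]; positivity
  -- a.e. facts about the measure
  have hae : ∀ z₀ ∈ Metric.ball c r2,
      ∀ᵐ l ∂ν, |l| ≤ b ∧ ∀ x ∈ Metric.ball z₀ (r2 - dist z₀ c), m0 ≤ |1 - x * l| := by
    intro z₀ hz₀
    rw [Metric.mem_ball] at hz₀
    filter_upwards [ae_mem_msupport ν] with l hl
    refine ⟨by rw [abs_of_pos (hν_pos hl)]; exact hble l hl, fun x hx => ?_⟩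
    apply hm0 x _ l hl
    rw [hJdef, Metric.mem_closedBall]
    rw [Metric.mem_ball] at hx
    calc dist x c ≤ dist x z₀ + dist z₀ c := dist_triangle _ _ _
      _ ≤ (r2 - dist z₀ c) + dist z₀ c := by linarith [hx.le]
      _ = r2 := by ring
  have hballJ : Metric.ball c r2 ⊆ J := Metric.ball_subset_closedBall
  have hGderiv : ∀ (k : ℕ), ∀ z ∈ Metric.ball c r2,
      HasDerivAt (Gf γ ν k) (Gf γ ν (k + 1) z) z := by
    intro k z hz
    have hzmem := Metric.mem_ball.1 hz
    exact hasDerivAt_Gf γ ν k (by linarith) hm0pos (hae z hz) (hJz z (hballJ hz)).2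
  have hcball : c ∈ Metric.ball c r2 := Metric.mem_ball_self hr2pos
  have haec : ∀ᵐ l ∂ν, |l| ≤ b ∧ m0 ≤ |1 - c * l| := by
    filter_upwards [ae_mem_msupport ν] with l hl
    exact ⟨by rw [abs_of_pos (hν_pos hl)]; exact hble l hl, hm0 c (Metric.mem_closedBall_self hr2pos.le) l hl⟩
  have hint : ∀ k : ℕ, Integrable (phif k c) ν := fun k => phif_integrable ν k hm0pos haec
  -- identification of g with Gf
  have hgG : g = Gf γ ν 0 := by
    funext w
    simp [hg, Gf, phif, Nat.factorial]
  have hg1' : Gf γ ν 1 c = 0 := by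
    rw [← (hGderiv 0 c hcball).deriv, ← hgG]
    exact hg1
  have hg2' : Gf γ ν 2 c = 0 := by
    rw [← iter_eq (Gf γ ν) _ Metric.isOpen_ball 2 (fun k _ z hz => hGderiv k z hz) c hcball, ← hgG]
    exact hg2
  have hg3id : iteratedDeriv 3 g c = Gf γ ν 3 c := by
    rw [hgG]
    exact iter_eq (Gf γ ν) _ Metric.isOpen_ball 3 (fun k _ z hz => hGderiv k z hz) c hcball
  -- the Cauchy–Schwarz style positivity
  have hccl : ∀ l ∈ msupport ν, 1 - c * l ≠ 0 := by
    intro l hl h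
    have hlne : l ≠ 0 := (hν_pos hl).ne'
    have h1 : (1:ℝ) = c * l := sub_eq_zero.1 h
    have hc_eq : c = l⁻¹ := by field_simp; linarith
    have h2 := hρ l hl
    rw [hc_eq] at h2
    simp at h2
    linarith
  have hq_eq : ∀ l : ℝ, phif 1 c l ^ 2 * (phif 1 c l + c⁻¹) ^ 2
      = phif 4 c l + 2 * c⁻¹ * phif 3 c l + (c⁻¹)^2 * phif 2 c l := by
    intro l
    unfold phif
    ring
  have hqpos : ∀ l ∈ msupport ν, 0 < phif 1 c l ^ 2 * (phif 1 c l + c⁻¹) ^ 2 := by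
    intro l hl
    have hlpos := hν_pos hl
    have h1 : phif 1 c l ≠ 0 := by
      unfold phif
      simp only [pow_one]
      exact div_ne_zero hlpos.ne' (hccl l hl)
    have h2 : phif 1 c l + c⁻¹ ≠ 0 := by
      unfold phif
      simp only [pow_one]
      intro h
      rw [div_add' _ _ _ (hccl l hl)] at h
      have h3 : l * c + (1 - c * l) * 1 = 0 ∨ False := by
        rcases div_eq_zero_iff.1 h with h4 | h4
        · left
          field_simp at h4
          nlinarith [h4]
        · exact absurd h4 (hccl l hl)
      rcases h3 with h3 | h3
      · nlinarith [h3]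
      · exact h3
    positivity
  have hI4 : (c⁻¹)^4 < γ * ∫ l, phif 4 c l ∂ν := by
    set q : ℝ → ℝ := fun l => phif 1 c l ^ 2 * (phif 1 c l + c⁻¹) ^ 2 with hqdef
    have hqE : q = fun l => phif 4 c l + 2 * c⁻¹ * phif 3 c l + (c⁻¹)^2 * phif 2 c l :=
      funext hq_eq
    have hqint : Integrable q ν := by
      rw [hqE]
      exact ((hint 4).add ((hint 3).const_mul _)).add ((hint 2).const_mul _)
    have hqpos' : 0 < ∫ l, q l ∂ν := by
      rw [MeasureTheory.integral_pos_iff_support_of_nonneg_ae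
        (Eventually.of_forall fun l => by rw [hqdef]; positivity) hqint]
      calc 0 < ν (msupport ν) := hsupp_pos
        _ ≤ ν (Function.support q) := measure_mono fun l hl => (hqpos l hl).ne'
    have hsplit : ∫ l, q l ∂ν = (∫ l, phif 4 c l ∂ν) + 2 * c⁻¹ * (∫ l, phif 3 c l ∂ν)
        + (c⁻¹)^2 * (∫ l, phif 2 c l ∂ν) := by
      simp only [hqE]
      have hA : Integrable (fun l => phif 4 c l + 2 * c⁻¹ * phif 3 c l) ν := by
        exact (hint 4).add ((hint 3).const_mul _)
      have hB : Integrable (fun l => (c⁻¹)^2 * phif 2 c l) ν := (hint 2).const_mul _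
      rw [MeasureTheory.integral_add hA hB,
        MeasureTheory.integral_add (hint 4) ((hint 3).const_mul _),
        MeasureTheory.integral_const_mul, MeasureTheory.integral_const_mul]
    have hI2 : γ * ∫ l, phif 2 c l ∂ν = (c⁻¹)^2 := by
      have h := hg1'
      simp only [Gf] at h
      norm_num [Nat.factorial] at h
      rw [← inv_pow] at h
      linarith
    have hI3 : γ * ∫ l, phif 3 c l ∂ν = -((c⁻¹)^3) := by
      have h := hg2'
      simp only [Gf] at h
      norm_num [Nat.factorial] at h
      rw [← inv_pow] at h
      linarith
    have h := mul_pos hγ hqpos'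
    have hexp : γ * ∫ l, q l ∂ν = γ * (∫ l, phif 4 c l ∂ν)
        + 2 * c⁻¹ * (γ * ∫ l, phif 3 c l ∂ν) + (c⁻¹)^2 * (γ * ∫ l, phif 2 c l ∂ν) := by
      rw [hsplit]; ring
    rw [hexp, hI2, hI3] at h
    nlinarith [h]
  have hg3pos : 0 < Gf γ ν 3 c := by
    have h6 : ((Nat.factorial 3 : ℕ) : ℝ) = 6 := by norm_num [Nat.factorial]
    simp only [Gf]
    rw [h6]
    have : ((-1:ℝ)) ^ 3 = -1 := by norm_num
    rw [this]
    linarith [hI4]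
  refine ⟨hg3id ▸ hg3pos, ?_⟩
  -- uniform bounds
  set M : ℝ := max (C / m1) (b / m0) with hMdef
  have hMpos : 0 < M := lt_of_lt_of_le (div_pos hCpos hm1pos) (le_max_left _ _)
  set K : ℕ → ℝ := fun k => (Nat.factorial k : ℝ) * ((z0⁻¹)^(k+1) + (γ+1) * M^(k+1)) with hKdef
  have hKpos : ∀ k, 0 < K k := by
    intro k
    apply mul_pos (by exact_mod_cast Nat.factorial_pos k)
    positivity
  have habsfac : ∀ k : ℕ, |(-1:ℝ)^k * (Nat.factorial k : ℝ)| = (Nat.factorial k : ℝ) := by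
    intro k
    rw [abs_mul, abs_pow, abs_neg, abs_one, one_pow, one_mul,
      abs_of_nonneg (by positivity : (0:ℝ) ≤ (Nat.factorial k : ℝ))]
  have hGbound : ∀ k, ∀ z ∈ J, |Gf γ ν k z| ≤ K k := by
    intro k z hz
    obtain ⟨hz0', hzne⟩ := hJz z hz
    have haez : ∀ᵐ l ∂ν, |l| ≤ b ∧ m0 ≤ |1 - z * l| := by
      filter_upwards [ae_mem_msupport ν] with l hl
      exact ⟨by rw [abs_of_pos (hν_pos hl)]; exact hble l hl, hm0 z hz l hl⟩
    have h1 : |(z⁻¹)^(k+1)| ≤ (z0⁻¹)^(k+1) := by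
      rw [abs_pow, abs_inv]
      exact pow_le_pow_left₀ (by positivity) (inv_anti₀ hz0pos hz0') _
    have h2 : |∫ l, phif (k+1) z l ∂ν| ≤ M^(k+1) := by
      refine (phif_integral_abs_le ν (k+1) hm0pos haez).trans ?_
      exact pow_le_pow_left₀ (by positivity) (le_max_right _ _) _
    simp only [Gf, hKdef]
    refine (abs_add_le _ _).trans ?_
    have t1 : |(-1:ℝ)^k * (Nat.factorial k : ℝ) * (z⁻¹)^(k+1)| ≤ (Nat.factorial k : ℝ) * (z0⁻¹)^(k+1) := by
      rw [abs_mul, habsfac k]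
      exact mul_le_mul_of_nonneg_left h1 (by positivity)
    have t2 : |(Nat.factorial k : ℝ) * (γ * ∫ l, phif (k+1) z l ∂ν)|
        ≤ (Nat.factorial k : ℝ) * ((γ+1) * M^(k+1)) := by
      rw [abs_mul, abs_mul, abs_of_nonneg (by positivity : (0:ℝ) ≤ (Nat.factorial k : ℝ)),
        abs_of_nonneg hγ.le]
      apply mul_le_mul_of_nonneg_left _ (by positivity)
      calc γ * |∫ l, phif (k+1) z l ∂ν| ≤ γ * M^(k+1) :=
            mul_le_mul_of_nonneg_left h2 hγ.le
        _ ≤ (γ+1) * M^(k+1) := by nlinarith [pow_pos hMpos (k+1)]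
    calc _ ≤ (Nat.factorial k : ℝ) * (z0⁻¹)^(k+1) + (Nat.factorial k : ℝ) * ((γ+1) * M^(k+1)) :=
          add_le_add t1 t2
      _ = (Nat.factorial k : ℝ) * ((z0⁻¹)^(k+1) + (γ+1) * M^(k+1)) := by ring
  -- eventual basics
  have hnn : ∀ᶠ N in atTop, 1 ≤ n N := by
    have h2 : ∀ᶠ N in atTop, (0:ℝ) < (n N : ℝ)/N := hn.eventually_const_lt hγ |>.mono (fun N h => h) |>.mono (fun N h => h)
    filter_upwards [h2] with N h
    by_contra hcon
    push_neg at hcon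
    interval_cases hN : n N
    · simp [hN] at h
  have hratio : ∀ᶠ N in atTop, (n N : ℝ)/N ≤ γ + 1 :=
    (hn.eventually_lt_const (by linarith : γ < γ + 1)).mono fun N h => h.le
  have hm1N : ∀ N, (∀ j, ε0 ≤ lam N j) → (∀ j, ε1 ≤ |c - (lam N j)⁻¹|) →
      ∀ z ∈ J, ∀ j, m1 ≤ |1 - z * lam N j| := fun N h0 h1 z hz j =>
    hlow z hz _ ε0 ε1 (hlam_pos N j) hε0.le (h0 j) (h1 j) hr2ε1
  have hGNderiv : ∀ N, (∀ j, ε0 ≤ lam N j) → (∀ j, ε1 ≤ |c - (lam N j)⁻¹|) →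
      ∀ k, ∀ z ∈ J, HasDerivAt (GNf n lam N k) (GNf n lam N (k+1) z) z := by
    intro N h0 h1 k z hz
    apply hasDerivAt_GNf n lam N k (hJz z hz).2
    intro j h
    have := hm1N N h0 h1 z hz j
    rw [h, abs_zero] at this
    linarith
  have hGNbound : ∀ N, (n N:ℝ)/N ≤ γ+1 → (∀ j, ε0 ≤ lam N j) →
      (∀ j, ε1 ≤ |c - (lam N j)⁻¹|) → ∀ k, ∀ z ∈ J, |GNf n lam N k z| ≤ K k := by
    intro N hrat h0 h1 k z hz
    obtain ⟨hz0', hzne⟩ := hJz z hz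
    have h1' : |(z⁻¹)^(k+1)| ≤ (z0⁻¹)^(k+1) := by
      rw [abs_pow, abs_inv]
      exact pow_le_pow_left₀ (by positivity) (inv_anti₀ hz0pos hz0') _
    have hsum : |∑ j, phif (k+1) z (lam N j)| ≤ (n N : ℝ) * (C/m1)^(k+1) := by
      refine (Finset.abs_sum_le_sum_abs _ _).trans ?_
      calc ∑ j, |phif (k+1) z (lam N j)| ≤ ∑ _j : Fin (n N), (C/m1)^(k+1) := by
            apply Finset.sum_le_sum
            intro j _
            exact phif_abs_le hm1pos
              (by rw [abs_of_pos (hlam_pos N j)]; exact hC N j) (hm1N N h0 h1 z hz j)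
        _ = (n N : ℝ) * (C/m1)^(k+1) := by
            rw [Finset.sum_const, Finset.card_univ, Fintype.card_fin, nsmul_eq_mul]
    have h2 : |(N:ℝ)⁻¹ * ∑ j, phif (k+1) z (lam N j)| ≤ (γ+1) * M^(k+1) := by
      rw [abs_mul, abs_inv, Nat.abs_cast]
      calc (N:ℝ)⁻¹ * |∑ j, phif (k+1) z (lam N j)| ≤ (N:ℝ)⁻¹ * ((n N : ℝ) * (C/m1)^(k+1)) := by
            apply mul_le_mul_of_nonneg_left hsum (by positivity)
        _ = ((n N : ℝ)/N) * (C/m1)^(k+1) := by ring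
        _ ≤ (γ+1) * M^(k+1) := by
            apply mul_le_mul hrat (pow_le_pow_left₀ (by positivity) (le_max_left _ _) _)
              (by positivity) (by linarith)
    simp only [GNf, hKdef]
    refine (abs_add_le _ _).trans ?_
    have t1 : |(-1:ℝ)^k * (Nat.factorial k : ℝ) * (z⁻¹)^(k+1)| ≤ (Nat.factorial k : ℝ) * (z0⁻¹)^(k+1) := by
      rw [abs_mul, habsfac k]
      exact mul_le_mul_of_nonneg_left h1' (by positivity)
    have t2 : |(Nat.factorial k : ℝ) * ((N:ℝ)⁻¹ * ∑ j, phif (k+1) z (lam N j))|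
        ≤ (Nat.factorial k : ℝ) * ((γ+1) * M^(k+1)) := by
      rw [abs_mul, abs_of_nonneg (by positivity : (0:ℝ) ≤ (Nat.factorial k : ℝ))]
      exact mul_le_mul_of_nonneg_left h2 (by positivity)
    calc _ ≤ (Nat.factorial k : ℝ) * (z0⁻¹)^(k+1) + (Nat.factorial k : ℝ) * ((γ+1) * M^(k+1)) :=
          add_le_add t1 t2
      _ = (Nat.factorial k : ℝ) * ((z0⁻¹)^(k+1) + (γ+1) * M^(k+1)) := by ring
  -- Lipschitz estimates on the inner ball
  set I1 : Set ℝ := Metric.closedBall c (r2/2) with hI1def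
  have hI1ball : I1 ⊆ Metric.ball c r2 := Metric.closedBall_subset_ball (by linarith)
  have hI1J : I1 ⊆ J := hI1ball.trans hballJ
  have hGlip : ∀ k, ∀ x ∈ I1, ∀ y ∈ I1, |Gf γ ν k x - Gf γ ν k y| ≤ K (k+1) * |x - y| := by
    intro k x hx y hy
    have h := Convex.norm_image_sub_le_of_norm_hasDerivWithin_le
      (f := Gf γ ν k) (f' := Gf γ ν (k+1)) (s := I1) (C := K (k+1))
      (fun w hw => (hGderiv k w (hI1ball hw)).hasDerivWithinAt)
      (fun w hw => by rw [Real.norm_eq_abs]; exact hGbound (k+1) w (hI1J hw))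
      (convex_closedBall _ _) hy hx
    rw [Real.norm_eq_abs, Real.norm_eq_abs] at h
    exact h
  have hGNlip : ∀ N, (n N:ℝ)/N ≤ γ+1 → (∀ j, ε0 ≤ lam N j) →
      (∀ j, ε1 ≤ |c - (lam N j)⁻¹|) →
      ∀ k, ∀ x ∈ I1, ∀ y ∈ I1, |GNf n lam N k x - GNf n lam N k y| ≤ K (k+1) * |x - y| := by
    intro N hrat h0 h1 k x hx y hy
    have h := Convex.norm_image_sub_le_of_norm_hasDerivWithin_le
      (f := GNf n lam N k) (f' := GNf n lam N (k+1)) (s := I1) (C := K (k+1))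
      (fun w hw => (hGNderiv N h0 h1 k w (hI1J hw)).hasDerivWithinAt)
      (fun w hw => by rw [Real.norm_eq_abs]; exact hGNbound N hrat h0 h1 (k+1) w (hI1J hw))
      (convex_closedBall _ _) hy hx
    rw [Real.norm_eq_abs, Real.norm_eq_abs] at h
    exact h
  -- pointwise convergence of the empirical quantities
  have hconv : ∀ (k : ℕ) (z : ℝ), z ∈ J → Tendsto (fun (N : ℕ) => (N:ℝ)⁻¹ * ∑ j, phif k z (lam N j))
      atTop (𝓝 (γ * ∫ l, phif k z l ∂ν)) := by
    intro k z hzJ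
    obtain ⟨hz0', hzne⟩ := hJz z hzJ
    set m : ℝ := min m0 m1 with hmdef
    have hmpos : 0 < m := lt_min hm0pos hm1pos
    set R : ℝ := max 1 (max C b) with hRdef
    have hRpos : (0:ℝ) < R := lt_of_lt_of_le one_pos (le_max_left _ _)
    have hCR : C ≤ R := (le_max_left C b).trans (le_max_right 1 _)
    have hbR : b ≤ R := (le_max_right C b).trans (le_max_right 1 _)
    set w : ℝ → ℝ := fun l => max 0 (min 1 (2/m * |1 - z*l| - 1)) with hwdef
    set χ : ℝ → ℝ := fun l => max 0 (min 1 (2 - |l|/R)) with hχdef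
    set f : ℝ → ℝ := fun l => phif k z l * (w l * χ l) with hfdef
    have hw01 : ∀ l, 0 ≤ w l ∧ w l ≤ 1 := fun l =>
      ⟨le_max_left _ _, max_le (by norm_num) (min_le_left _ _)⟩
    have hχ01 : ∀ l, 0 ≤ χ l ∧ χ l ≤ 1 := fun l =>
      ⟨le_max_left _ _, max_le (by norm_num) (min_le_left _ _)⟩
    have hw1 : ∀ l, m ≤ |1 - z*l| → w l = 1 := by
      intro l h
      have h2 : 2/m * m ≤ 2/m * |1-z*l| := mul_le_mul_of_nonneg_left h (by positivity)
      rw [div_mul_cancel₀ _ hmpos.ne'] at h2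
      have h3 : (1:ℝ) ≤ 2/m * |1 - z*l| - 1 := by linarith
      rw [hwdef]
      simp only []
      rw [min_eq_left h3, max_eq_right (by norm_num : (0:ℝ) ≤ 1)]
    have hw0 : ∀ l, |1 - z*l| ≤ m/2 → w l = 0 := by
      intro l h
      have h2 : 2/m * |1-z*l| ≤ 2/m * (m/2) := mul_le_mul_of_nonneg_left h (by positivity)
      have h3 : 2/m*(m/2) = 1 := by field_simp
      rw [hwdef]
      simp only []
      rw [max_eq_left ((min_le_right _ _).trans (by linarith))]
    have hwne : ∀ l, w l ≠ 0 → m/2 < |1 - z*l| := by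
      intro l h
      by_contra hc
      push_neg at hc
      exact h (hw0 l hc)
    have hχ1 : ∀ l, |l| ≤ R → χ l = 1 := by
      intro l h
      have h2 : |l|/R ≤ 1 := (div_le_one hRpos).2 h
      rw [hχdef]
      simp only []
      rw [min_eq_left (by linarith), max_eq_right (by norm_num : (0:ℝ) ≤ 1)]
    have hχne : ∀ l, χ l ≠ 0 → |l| ≤ 2*R := by
      intro l h
      by_contra hc
      push_neg at hc
      apply h
      have h2 : 2 - |l|/R ≤ 0 := by
        rw [sub_nonpos, le_div_iff₀ hRpos]
        linarith
      rw [hχdef]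
      simp only []
      rw [max_eq_left ((min_le_right _ _).trans h2)]
    have habscont : Continuous fun l : ℝ => |1 - z*l| :=
      (continuous_const.sub (continuous_const.mul continuous_id)).abs
    have hwcont : Continuous w := by
      apply continuous_const.max
      exact continuous_const.min ((continuous_const.mul habscont).sub continuous_const)
    have hχcont : Continuous χ := by
      apply continuous_const.max
      exact continuous_const.min (continuous_const.sub (continuous_abs.div_const R))
    have hfcont : Continuous f := by
      rw [continuous_iff_continuousAt]
      intro l₀
      by_cases hcase : |1 - z * l₀| < m/2
      · have hopen : IsOpen {l : ℝ | |1 - z*l| < m/2} := isOpen_lt habscont continuous_const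
        have hev : ∀ᶠ l in 𝓝 l₀, f l = 0 := by
          filter_upwards [hopen.mem_nhds hcase] with l hl
          rw [hfdef]
          simp only []
          rw [hw0 l (le_of_lt hl)]
          ring
        exact continuousAt_const.congr (hev.mono fun l hl => hl.symm)
      · push_neg at hcase
        have hne : 1 - z * l₀ ≠ 0 := by
          intro h
          rw [h, abs_zero] at hcase
          linarith
        have hphi : ContinuousAt (fun l => phif k z l) l₀ := by
          apply ContinuousAt.pow
          exact ContinuousAt.div continuousAt_id
            ((continuous_const.sub (continuous_const.mul continuous_id)).continuousAt) hne
        exact hphi.mul (hwcont.continuousAt.mul hχcont.continuousAt)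
    set B : ℝ := (2*R/(m/2))^k with hBdef
    have hBnn : (0:ℝ) ≤ B := by positivity
    have hfb : ∀ l, |f l| ≤ B := by
      intro l
      by_cases hwz : w l = 0
      · rw [hfdef]
        simp only [hwz, zero_mul, mul_zero, abs_zero]
        exact hBnn
      by_cases hχz : χ l = 0
      · rw [hfdef]
        simp only [hχz, mul_zero, abs_zero]
        exact hBnn
      · have h1 := hwne l hwz
        have h2 := hχne l hχz
        have h3 : |phif k z l| ≤ B := phif_abs_le (by positivity : (0:ℝ) < m/2) h2 h1.le
        have h4 : |w l * χ l| ≤ 1 := by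
          rw [abs_mul, abs_of_nonneg (hw01 l).1, abs_of_nonneg (hχ01 l).1]
          exact mul_le_one₀ (hw01 l).2 (hχ01 l).1 (hχ01 l).2
        calc |f l| = |phif k z l| * |w l * χ l| := by rw [hfdef]; exact abs_mul _ _
          _ ≤ B * 1 := mul_le_mul h3 h4 (abs_nonneg _) hBnn
          _ = B := mul_one B
    set F : BoundedContinuousFunction ℝ ℝ := BoundedContinuousFunction.ofNormedAddCommGroup
      f hfcont B (fun l => by rw [Real.norm_eq_abs]; exact hfb l) with hFdef
    have hFapp : ∀ l, F l = f l := fun l => rfl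
    have hFν : ∫ x, F x ∂ν = ∫ l, phif k z l ∂ν := by
      apply MeasureTheory.integral_congr_ae
      filter_upwards [ae_mem_msupport ν] with l hl
      rw [hFapp, hfdef]
      simp only []
      rw [hw1 l ((min_le_left m0 m1).trans (hm0 z hzJ l hl)),
        hχ1 l (by rw [abs_of_pos (hν_pos hl)]; exact (hble l hl).trans hbR)]
      ring
    have hweakF := hweak F
    rw [hFν] at hweakF
    have hmul := hn.mul hweakF
    refine Filter.Tendsto.congr' ?_ hmul
    filter_upwards [hev0, hev1, hnn, eventually_ge_atTop 1] with N h0 h1 hn1 hN1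
    have hFl : ∀ j, F (lam N j) = phif k z (lam N j) := by
      intro j
      rw [hFapp, hfdef]
      simp only []
      rw [hw1 _ ((min_le_right m0 m1).trans (hm1N N h0 h1 z hzJ j)),
        hχ1 _ (by rw [abs_of_pos (hlam_pos N j)]; exact (hC N j).trans hCR)]
      ring
    rw [Finset.sum_congr rfl (fun j _ => hFl j)]
    have hNne : (N:ℝ) ≠ 0 := by positivity
    have hnne : ((n N : ℕ):ℝ) ≠ 0 := by
      have : 0 < n N := hn1
      positivity
    field_simp
  have hGNconv : ∀ (k : ℕ) (z : ℝ), z ∈ J →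
      Tendsto (fun N => GNf n lam N k z) atTop (𝓝 (Gf γ ν k z)) := by
    intro k z hz
    have h := (hconv (k+1) z hz).const_mul ((Nat.factorial k : ℝ))
    have h2 := (tendsto_const_nhds
      (x := (-1:ℝ)^k * (Nat.factorial k : ℝ) * (z⁻¹)^(k+1)) (f := atTop (α := ℕ))).add h
    exact h2
  have hcJ : c ∈ J := Metric.mem_closedBall_self hr2pos.le
  -- choice of the final radius
  set τ : ℝ := Gf γ ν 3 c with hτdef
  have hτpos : 0 < τ := hg3pos
  set r₁ : ℝ := min (r2/2) (τ/(4*K 4)) with hr₁def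
  have hr₁pos : 0 < r₁ := lt_min (by linarith) (div_pos hτpos (by positivity))
  have hr₁r2 : r₁ ≤ r2/2 := min_le_left _ _
  have hr₁K : K 4 * r₁ ≤ τ/4 := by
    have h1 : r₁ ≤ τ/(4*K 4) := min_le_right _ _
    calc K 4 * r₁ ≤ K 4 * (τ/(4*(K 4))) := mul_le_mul_of_nonneg_left h1 (hKpos 4).le
      _ = τ/4 := by field_simp [(hKpos 4).ne']
  set Icc₁ : Set ℝ := Set.Icc (c - r₁) (c + r₁) with hIccdef
  have hIccI1 : Icc₁ ⊆ I1 := by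
    rw [hIccdef, hI1def, ← Real.closedBall_eq_Icc]
    exact Metric.closedBall_subset_closedBall hr₁r2
  have hcI1 : c ∈ I1 := Metric.mem_closedBall_self (by linarith)
  have hcIcc : c ∈ Icc₁ := by
    rw [hIccdef, Set.mem_Icc]
    constructor <;> linarith
  have hmIcc : c - r₁ ∈ Icc₁ := by
    rw [hIccdef, Set.mem_Icc]
    constructor <;> linarith
  have hpIcc : c + r₁ ∈ Icc₁ := by
    rw [hIccdef, Set.mem_Icc]
    constructor <;> linarith
  have habsr₁ : ∀ x ∈ Icc₁, |x - c| ≤ r₁ := by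
    intro x hx
    rw [hIccdef, Set.mem_Icc] at hx
    rw [abs_le]
    constructor <;> linarith [hx.1, hx.2]
  have hG3lower : ∀ x ∈ Icc₁, 3/4 * τ ≤ Gf γ ν 3 x := by
    intro x hx
    have h := hGlip 3 x (hIccI1 hx) c hcI1
    have h2 : |Gf γ ν 3 x - τ| ≤ τ/4 := by
      rw [hτdef]
      refine h.trans ?_
      calc K 4 * |x - c| ≤ K 4 * r₁ := mul_le_mul_of_nonneg_left (habsr₁ x hx) (hKpos 4).le
        _ ≤ τ/4 := hr₁K
    have h3 := (abs_le.1 h2).1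
    linarith
  have hG2mono : StrictMonoOn (Gf γ ν 2) Icc₁ := by
    apply strictMonoOn_of_deriv_pos (convex_Icc _ _)
    · intro x hx
      exact ((hGderiv 2 x (hI1ball (hIccI1 hx))).continuousAt).continuousWithinAt
    · intro x hx
      have hx' : x ∈ Icc₁ := interior_subset hx
      rw [(hGderiv 2 x (hI1ball (hIccI1 hx'))).deriv]
      linarith [hG3lower x hx']
  have hG2neg : Gf γ ν 2 (c - r₁) < 0 := by
    have h := hG2mono hmIcc hcIcc (by linarith)
    rw [hg2'] at h
    exact h
  have hG2pos : 0 < Gf γ ν 2 (c + r₁) := by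
    have h := hG2mono hcIcc hpIcc (by linarith)
    rw [hg2'] at h
    exact h
  have hev3c : ∀ᶠ N in atTop, 3/4*τ ≤ GNf n lam N 3 c :=
    ((hGNconv 3 c hcJ).eventually_const_lt (by linarith : 3/4*τ < τ)).mono fun N h => h.le
  have hevm : ∀ᶠ N in atTop, GNf n lam N 2 (c - r₁) < 0 :=
    (hGNconv 2 (c - r₁) (hI1J (hIccI1 hmIcc))).eventually_lt_const hG2neg
  have hevp : ∀ᶠ N in atTop, 0 < GNf n lam N 2 (c + r₁) :=
    (hGNconv 2 (c + r₁) (hI1J (hIccI1 hpIcc))).eventually_const_lt hG2pos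
  -- per-N structural facts
  have hkey : ∀ N, (∀ j, ε0 ≤ lam N j) → (∀ j, ε1 ≤ |c - (lam N j)⁻¹|) → ((n N:ℝ)/N ≤ γ+1) →
      (3/4*τ ≤ GNf n lam N 3 c) → (GNf n lam N 2 (c - r₁) < 0) → (0 < GNf n lam N 2 (c + r₁)) →
      (∀ x ∈ Icc₁, τ/2 ≤ GNf n lam N 3 x) ∧ StrictMonoOn (GNf n lam N 2) Icc₁ ∧
      (∃ x, x ∈ Icc₁ ∧ GNf n lam N 2 x = 0) := by
    intro N h0 h1 hrat h3c hm hp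
    have h3low : ∀ x ∈ Icc₁, τ/2 ≤ GNf n lam N 3 x := by
      intro x hx
      have h := hGNlip N hrat h0 h1 3 x (hIccI1 hx) c hcI1
      have h2 : |GNf n lam N 3 x - GNf n lam N 3 c| ≤ τ/4 := by
        refine h.trans ?_
        calc K 4 * |x - c| ≤ K 4 * r₁ := mul_le_mul_of_nonneg_left (habsr₁ x hx) (hKpos 4).le
          _ ≤ τ/4 := hr₁K
      have h3 := (abs_le.1 h2).1
      linarith
    have hmono : StrictMonoOn (GNf n lam N 2) Icc₁ := by
      apply strictMonoOn_of_deriv_pos (convex_Icc _ _)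
      · intro x hx
        exact ((hGNderiv N h0 h1 2 x (hI1J (hIccI1 hx))).continuousAt).continuousWithinAt
      · intro x hx
        have hx' : x ∈ Icc₁ := interior_subset hx
        rw [(hGNderiv N h0 h1 2 x (hI1J (hIccI1 hx'))).deriv]
        linarith [h3low x hx']
    have hivt : ∃ x, x ∈ Icc₁ ∧ GNf n lam N 2 x = 0 := by
      have hsub := intermediate_value_Icc (by linarith : c - r₁ ≤ c + r₁)
        (fun x hx => ((hGNderiv N h0 h1 2 x (hI1J (hIccI1 hx))).continuousAt).continuousWithinAt)
      obtain ⟨x, hx, hfx⟩ := hsub ⟨hm.le, hp.le⟩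
      exact ⟨x, hx, hfx⟩
    exact ⟨h3low, hmono, hivt⟩
  set cN : ℕ → ℝ := fun N => if h : ∃ x, x ∈ Icc₁ ∧ GNf n lam N 2 x = 0 then h.choose else c
    with hcNdef
  have hcNspec : ∀ N, (∃ x, x ∈ Icc₁ ∧ GNf n lam N 2 x = 0) →
      cN N ∈ Icc₁ ∧ GNf n lam N 2 (cN N) = 0 := by
    intro N h
    rw [hcNdef]
    simp only [dif_pos h]
    exact h.choose_spec
  have hmaster : ∀ᶠ N in atTop, (∀ x ∈ Icc₁, τ/2 ≤ GNf n lam N 3 x) ∧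
      StrictMonoOn (GNf n lam N 2) Icc₁ ∧ (cN N ∈ Icc₁ ∧ GNf n lam N 2 (cN N) = 0) ∧
      (∀ j, ε0 ≤ lam N j) ∧ (∀ j, ε1 ≤ |c - (lam N j)⁻¹|) ∧ ((n N:ℝ)/N ≤ γ+1) := by
    filter_upwards [hev0, hev1, hratio, hev3c, hevm, hevp] with N h0 h1 hrat h3c hm hp
    obtain ⟨A, B2, E⟩ := hkey N h0 h1 hrat h3c hm hp
    exact ⟨A, B2, hcNspec N E, h0, h1, hrat⟩
  -- convergence of cN to c
  have htendsto : Tendsto cN atTop (𝓝 c) := by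
    rw [Metric.tendsto_nhds]
    intro ε hε
    set δ : ℝ := min (ε/2) (r₁/2) with hδdef
    have hδpos : 0 < δ := lt_min (by linarith) (by linarith)
    have hδr₁ : δ ≤ r₁/2 := min_le_right _ _
    have hδε : δ ≤ ε/2 := min_le_left _ _
    have hmδ : c - δ ∈ Icc₁ := by
      rw [hIccdef, Set.mem_Icc]
      constructor <;> linarith
    have hpδ : c + δ ∈ Icc₁ := by
      rw [hIccdef, Set.mem_Icc]
      constructor <;> linarith
    have hGm : Gf γ ν 2 (c - δ) < 0 := by
      have h := hG2mono hmδ hcIcc (by linarith)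
      rw [hg2'] at h
      exact h
    have hGp : 0 < Gf γ ν 2 (c + δ) := by
      have h := hG2mono hcIcc hpδ (by linarith)
      rw [hg2'] at h
      exact h
    have he1 : ∀ᶠ N in atTop, GNf n lam N 2 (c - δ) < 0 :=
      (hGNconv 2 (c - δ) (hI1J (hIccI1 hmδ))).eventually_lt_const hGm
    have he2 : ∀ᶠ N in atTop, 0 < GNf n lam N 2 (c + δ) :=
      (hGNconv 2 (c + δ) (hI1J (hIccI1 hpδ))).eventually_const_lt hGp
    filter_upwards [hmaster, he1, he2] with N hM h1' h2'
    obtain ⟨_, hmono, ⟨hmem, hzero⟩, _⟩ := hM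
    have hl : c - δ < cN N := by
      by_contra hc'
      push_neg at hc'
      rcases eq_or_lt_of_le hc' with he | hlt
      · rw [← he] at h1'
        linarith [hzero, h1']
      · have := hmono hmem hmδ hlt
        linarith [hzero]
    have hr : cN N < c + δ := by
      by_contra hc'
      push_neg at hc'
      rcases eq_or_lt_of_le hc' with he | hlt
      · rw [he] at h2'
        linarith [hzero]
      · have := hmono hpδ hmem hlt
        linarith [hzero]
    rw [Real.dist_eq, abs_lt]
    constructor <;> linarith
  -- identification of iterated derivatives of gN
  have hgNG : ∀ N, gN N = GNf n lam N 0 := by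
    intro N
    funext z
    simp [hgN, GNf, phif, Nat.factorial]
  have hiter : ∀ N, (∀ j, ε0 ≤ lam N j) → (∀ j, ε1 ≤ |c - (lam N j)⁻¹|) →
      ∀ (mm : ℕ), ∀ x ∈ Metric.ball c r2, iteratedDeriv mm (gN N) x = GNf n lam N mm x := by
    intro N h0 h1 mm x hx
    rw [hgNG N]
    exact iter_eq (GNf n lam N) _ Metric.isOpen_ball mm
      (fun k _ y hy => hGNderiv N h0 h1 k y (hballJ hy)) x hx
  refine ⟨cN, htendsto, ?_, ?_, ?_, ?_⟩
  · -- eventual bundle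
    filter_upwards [hmaster] with N hM
    obtain ⟨h3low, hmono, ⟨hmem, hzero⟩, h0, h1, hrat⟩ := hM
    have hball : cN N ∈ Metric.ball c r2 := hI1ball (hIccI1 hmem)
    refine ⟨?_, ?_, ?_⟩
    · rw [hD]
      refine ⟨(hJz _ (hballJ hball)).2, ?_⟩
      intro hmem'
      have h2 := hρ _ hmem'
      rw [inv_inv] at h2
      rw [abs_sub_comm] at h2
      have h3 : |cN N - c| ≤ r₁ := habsr₁ _ hmem
      linarith [hρpos, hr₁r2, hr2ρ]
    · rw [hiter N h0 h1 2 _ hball]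
      exact hzero
    · rw [hiter N h0 h1 3 _ hball]
      linarith [h3low _ hmem]
  · -- convergence of the values
    have habsc : Tendsto (fun N => |cN N - c|) atTop (𝓝 0) := by
      have h := tendsto_iff_dist_tendsto_zero.1 htendsto
      simpa [Real.dist_eq] using h
    have hzeroc : Tendsto (fun N => |GNf n lam N 0 c - Gf γ ν 0 c|) atTop (𝓝 0) := by
      have h := (hGNconv 0 c hcJ).sub (tendsto_const_nhds (x := Gf γ ν 0 c))
      rw [sub_self] at h
      simpa using h.abs
    have hsq : Tendsto (fun N => |GNf n lam N 0 (cN N) - Gf γ ν 0 c|) atTop (𝓝 0) := by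
      apply squeeze_zero' (Eventually.of_forall fun N => abs_nonneg _)
        (g := fun N => K 1 * |cN N - c| + |GNf n lam N 0 c - Gf γ ν 0 c|) ?_ ?_
      · filter_upwards [hmaster] with N hM
        obtain ⟨_, _, ⟨hmem, _⟩, h0, h1, hrat⟩ := hM
        have t1 := hGNlip N hrat h0 h1 0 (cN N) (hIccI1 hmem) c hcI1
        calc |GNf n lam N 0 (cN N) - Gf γ ν 0 c|
            ≤ |GNf n lam N 0 (cN N) - GNf n lam N 0 c| + |GNf n lam N 0 c - Gf γ ν 0 c| :=
              abs_sub_le _ _ _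
          _ ≤ K 1 * |cN N - c| + |GNf n lam N 0 c - Gf γ ν 0 c| := by
              have := t1
              linarith
      · have h := (habsc.const_mul (K 1)).add hzeroc
        simpa using h
    have h2 : Tendsto (fun N => GNf n lam N 0 (cN N)) atTop (𝓝 (Gf γ ν 0 c)) := by
      rw [tendsto_iff_dist_tendsto_zero]
      simpa [Real.dist_eq] using hsq
    rw [hgG]
    exact h2.congr fun N => by rw [hgNG N]
  · -- convergence of the derivatives
    have habsc : Tendsto (fun N => |cN N - c|) atTop (𝓝 0) := by
      have h := tendsto_iff_dist_tendsto_zero.1 htendsto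
      simpa [Real.dist_eq] using h
    have hzeroc : Tendsto (fun N => |GNf n lam N 1 c - Gf γ ν 1 c|) atTop (𝓝 0) := by
      have h := (hGNconv 1 c hcJ).sub (tendsto_const_nhds (x := Gf γ ν 1 c))
      rw [sub_self] at h
      simpa using h.abs
    have hsq : Tendsto (fun N => |GNf n lam N 1 (cN N) - Gf γ ν 1 c|) atTop (𝓝 0) := by
      apply squeeze_zero' (Eventually.of_forall fun N => abs_nonneg _)
        (g := fun N => K 2 * |cN N - c| + |GNf n lam N 1 c - Gf γ ν 1 c|) ?_ ?_
      · filter_upwards [hmaster] with N hM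
        obtain ⟨_, _, ⟨hmem, _⟩, h0, h1, hrat⟩ := hM
        have t1 := hGNlip N hrat h0 h1 1 (cN N) (hIccI1 hmem) c hcI1
        calc |GNf n lam N 1 (cN N) - Gf γ ν 1 c|
            ≤ |GNf n lam N 1 (cN N) - GNf n lam N 1 c| + |GNf n lam N 1 c - Gf γ ν 1 c| :=
              abs_sub_le _ _ _
          _ ≤ K 2 * |cN N - c| + |GNf n lam N 1 c - Gf γ ν 1 c| := by
              have := t1
              linarith
      · have h := (habsc.const_mul (K 2)).add hzeroc
        simpa using h
    have h2 : Tendsto (fun N => GNf n lam N 1 (cN N)) atTop (𝓝 (Gf γ ν 1 c)) := by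
      rw [tendsto_iff_dist_tendsto_zero]
      simpa [Real.dist_eq] using hsq
    have heq : ∀ᶠ N in atTop, GNf n lam N 1 (cN N) = deriv (gN N) (cN N) := by
      filter_upwards [hmaster] with N hM
      obtain ⟨_, _, ⟨hmem, _⟩, h0, h1, _⟩ := hM
      have hball : cN N ∈ Metric.ball c r2 := hI1ball (hIccI1 hmem)
      rw [hgNG N]
      exact ((hGNderiv N h0 h1 0 (cN N) (hballJ hball)).deriv).symm
    have h3 := h2.congr' heq
    rw [hg1'] at h3
    exact h3
  · -- uniqueness
    intro cN' hc' hz'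
    have hev' : ∀ᶠ N in atTop, dist (cN' N) c < r₁ := Metric.tendsto_nhds.1 hc' r₁ hr₁pos
    filter_upwards [hmaster, hz', hev'] with N hM hz2 hd
    obtain ⟨_, hmono, ⟨hmem, hzero⟩, h0, h1, _⟩ := hM
    have hmem' : cN' N ∈ Icc₁ := by
      rw [Real.dist_eq] at hd
      rw [hIccdef, Set.mem_Icc]
      have := abs_lt.1 hd
      constructor <;> linarith [this.1, this.2]
    have hball' : cN' N ∈ Metric.ball c r2 := hI1ball (hIccI1 hmem')
    have hz3 : GNf n lam N 2 (cN' N) = 0 := by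
      rw [← hiter N h0 h1 2 _ hball']
      exact hz2
    exact hmono.injOn hmem' hmem (by rw [hz3, hzero])

end
end
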